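/- Let Γ be the function on the open unit disk defined by Γ(x,y) = (x² + y²)^{1/2} · (−(1/2)·ln(x² + y²))^{−3/2} for 0 < x² + y² < 1 and Γ(0,0) = 0. Consider the piecewise smooth vector field Z* = (X*, Y*) with X*(x,y) = (y, x) and Y*(x,y) = (x + (1/2)Γ(x,y), x + y + (1/2)Γ(x,y)), and its piecewise linear part Z*_L = (X*_L, Y*_L) with X*_L(x,y) = (y, x) and Y*_L(x,y) = (x, x + y). Then Z* belongs to Ω₀, the Jacobian matrices of Y* and Y*_L at the origin coincide, and Z* is NOT locally Σ-equivalent to Z*_L near the origin. -/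

import Mathlib

open Set Filter

noncomputable section

/-- Entry (1,1) of the Jacobian matrix of `X` at the origin. -/
noncomputable def jac11 (X : ℝ × ℝ → ℝ × ℝ) : ℝ := (fderiv ℝ X (0, 0) (1, 0)).1
/-- Entry (1,2) of the Jacobian matrix of `X` at the origin. -/
noncomputable def jac12 (X : ℝ × ℝ → ℝ × ℝ) : ℝ := (fderiv ℝ X (0, 0) (0, 1)).1
/-- Entry (2,1) of the Jacobian matrix of `X` at the origin, i.e. `∂ₓX₂(0,0)`. -/
noncomputable def jac21 (X : ℝ × ℝ → ℝ × ℝ) : ℝ := (fderiv ℝ X (0, 0) (1, 0)).2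
/-- Entry (2,2) of the Jacobian matrix of `X` at the origin. -/
noncomputable def jac22 (X : ℝ × ℝ → ℝ × ℝ) : ℝ := (fderiv ℝ X (0, 0) (0, 1)).2

/-- Determinant of the Jacobian matrix of `X` at the origin. -/
noncomputable def detJ (X : ℝ × ℝ → ℝ × ℝ) : ℝ := jac11 X * jac22 X - jac12 X * jac21 X
/-- Trace of the Jacobian matrix of `X` at the origin. -/
noncomputable def trJ (X : ℝ × ℝ → ℝ × ℝ) : ℝ := jac11 X + jac22 X

/-- The first (complex) eigenvalue of the Jacobian matrix of `X` at the origin. -/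
noncomputable def eig1 (X : ℝ × ℝ → ℝ × ℝ) : ℂ :=
  if 0 ≤ trJ X ^ 2 - 4 * detJ X then
    (((trJ X + Real.sqrt (trJ X ^ 2 - 4 * detJ X)) / 2 : ℝ) : ℂ)
  else
    (((trJ X / 2 : ℝ) : ℂ) + (Real.sqrt (4 * detJ X - trJ X ^ 2) / 2 : ℝ) * Complex.I)

/-- The second (complex) eigenvalue of the Jacobian matrix of `X` at the origin. -/
noncomputable def eig2 (X : ℝ × ℝ → ℝ × ℝ) : ℂ :=
  if 0 ≤ trJ X ^ 2 - 4 * detJ X then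
    (((trJ X - Real.sqrt (trJ X ^ 2 - 4 * detJ X)) / 2 : ℝ) : ℂ)
  else
    (((trJ X / 2 : ℝ) : ℂ) - (Real.sqrt (4 * detJ X - trJ X ^ 2) / 2 : ℝ) * Complex.I)

/-- The quantity ℓ : `Re λ₁⁺/|Im λ₁⁺| + Re λ₁⁻/|Im λ₁⁻|` when both imaginary parts are
nonzero, and `1` otherwise. -/
noncomputable def ellVal (X Y : ℝ × ℝ → ℝ × ℝ) : ℝ :=
  if (eig1 X).im * (eig1 Y).im ≠ 0 then
    (eig1 X).re / |(eig1 X).im| + (eig1 Y).re / |(eig1 Y).im|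
  else 1

/-- Membership in Ω₀ : `Z = (X, Y)` is a piecewise `C¹` vector field on the open set `U`
containing the origin, the origin is a zero of both `X` and `Y`, it is non-degenerate for
both, and `∂ₓX₂(0,0) ⬝ ∂ₓY₂(0,0) > 0`. -/
def InOmega0 (U : Set (ℝ × ℝ)) (X Y : ℝ × ℝ → ℝ × ℝ) : Prop :=
  IsOpen U ∧ (0, 0) ∈ U ∧ ContDiffOn ℝ 1 X U ∧ ContDiffOn ℝ 1 Y U ∧
    X (0, 0) = (0, 0) ∧ Y (0, 0) = (0, 0) ∧ detJ X * detJ Y ≠ 0 ∧ jac21 X * jac21 Y > 0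

/-- Membership in Ω₁ : member of Ω₀ with distinct eigenvalues of each Jacobian matrix
and `ℓ ≠ 0`. -/
def InOmega1 (U : Set (ℝ × ℝ)) (X Y : ℝ × ℝ → ℝ × ℝ) : Prop :=
  InOmega0 U X Y ∧ eig1 X ≠ eig2 X ∧ eig1 Y ≠ eig2 Y ∧ ellVal X Y ≠ 0

/-- `γ` is a solution of `ẋ = X(x)` on the time set `I`. -/
def IsSolutionOn (X : ℝ × ℝ → ℝ × ℝ) (γ : ℝ → ℝ × ℝ) (I : Set ℝ) : Prop :=
  ∀ t ∈ I, HasDerivAt γ (X (γ t)) t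

/-- `H` maps orbit arcs of `X` lying in `S` onto orbit arcs of `X'` lying in `S'`,
preserving the direction of time (via an increasing homeomorphism of time intervals). -/
def MapsOrbits (X X' : ℝ × ℝ → ℝ × ℝ) (H : ℝ × ℝ → ℝ × ℝ) (S S' : Set (ℝ × ℝ)) : Prop :=
  ∀ (γ : ℝ → ℝ × ℝ) (I : Set ℝ), I.OrdConnected → IsSolutionOn X γ I →
    (∀ t ∈ I, γ t ∈ S) →
    ∃ (δ : ℝ → ℝ × ℝ) (J : Set ℝ) (τ : ℝ → ℝ),
      J.OrdConnected ∧ IsSolutionOn X' δ J ∧ (∀ s ∈ J, δ s ∈ S') ∧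
      Set.BijOn τ I J ∧ StrictMonoOn τ I ∧ ContinuousOn τ I ∧
      ∀ t ∈ I, H (γ t) = δ (τ t)

/-- Local Σ-equivalence near the origin between the piecewise smooth vector fields
`Z = (X, Y)` and `Z' = (X', Y')`: a homeomorphism `H` between neighborhoods of the origin
fixing the origin, preserving the switching line `{y = 0}`, and mapping orbit arcs of `X`
(resp. `Y`) in `{y ≥ 0}` (resp. `{y ≤ 0}`) onto orbit arcs of `X'` (resp. `Y'`),
preserving the direction of time, and conversely. -/
def LocalSigmaEquiv (X Y X' Y' : ℝ × ℝ → ℝ × ℝ) : Prop :=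
  ∃ (U₀ V₀ : Set (ℝ × ℝ)) (H Hinv : ℝ × ℝ → ℝ × ℝ),
    U₀ ∈ nhds ((0, 0) : ℝ × ℝ) ∧ V₀ ∈ nhds ((0, 0) : ℝ × ℝ) ∧
    ContinuousOn H U₀ ∧ ContinuousOn Hinv V₀ ∧
    Set.BijOn H U₀ V₀ ∧
    (∀ p ∈ U₀, Hinv (H p) = p) ∧ (∀ q ∈ V₀, H (Hinv q) = q) ∧
    H (0, 0) = (0, 0) ∧
    H '' (U₀ ∩ {p : ℝ × ℝ | p.2 = 0}) = V₀ ∩ {p : ℝ × ℝ | p.2 = 0} ∧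
    MapsOrbits X X' H (U₀ ∩ {p : ℝ × ℝ | 0 ≤ p.2}) (V₀ ∩ {p : ℝ × ℝ | 0 ≤ p.2}) ∧
    MapsOrbits Y Y' H (U₀ ∩ {p : ℝ × ℝ | p.2 ≤ 0}) (V₀ ∩ {p : ℝ × ℝ | p.2 ≤ 0}) ∧
    MapsOrbits X' X Hinv (V₀ ∩ {p : ℝ × ℝ | 0 ≤ p.2}) (U₀ ∩ {p : ℝ × ℝ | 0 ≤ p.2}) ∧
    MapsOrbits Y' Y Hinv (V₀ ∩ {p : ℝ × ℝ | p.2 ≤ 0}) (U₀ ∩ {p : ℝ × ℝ | p.2 ≤ 0})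

/-- The function `Γ(x,y) = (x²+y²)^{1/2} ⬝ (−(1/2) ln(x²+y²))^{−3/2}` for
`x²+y² ≠ 0`, and `Γ(0,0) = 0`. -/
noncomputable def GammaFn (p : ℝ × ℝ) : ℝ :=
  if p.1 ^ 2 + p.2 ^ 2 = 0 then 0
  else (p.1 ^ 2 + p.2 ^ 2) ^ ((1 : ℝ) / 2) *
    (-(1 / 2) * Real.log (p.1 ^ 2 + p.2 ^ 2)) ^ (-(3 : ℝ) / 2)

namespace S9
def Rf (p : ℝ × ℝ) : ℝ := p.1 ^ 2 + p.2 ^ 2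
lemma Rf_nonneg (p : ℝ × ℝ) : 0 ≤ Rf p := by unfold Rf; positivity
lemma Rf_eq_zero {p : ℝ × ℝ} (h : Rf p = 0) : p = 0 := by
  unfold Rf at h
  have h1 : p.1 = 0 ∧ p.2 = 0 := by
    constructor <;> nlinarith [sq_nonneg p.1, sq_nonneg p.2]
  exact Prod.ext h1.1 h1.2
lemma continuous_Rf : Continuous Rf := by unfold Rf; fun_prop
def bf (u : ℝ) : ℝ := -(1/2) * Real.log u
lemma bf_pos {u : ℝ} (h0 : 0 < u) (h1 : u < 1) : 0 < bf u := by
  have := Real.log_neg h0 h1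
  unfold bf; nlinarith
def Gf (u : ℝ) : ℝ := u ^ ((1:ℝ)/2) * bf u ^ (-(3:ℝ)/2)
lemma gammaFn_eq {p : ℝ × ℝ} (h : Rf p ≠ 0) : GammaFn p = Gf (Rf p) := by
  unfold GammaFn Gf bf Rf at *; rw [if_neg h]
lemma gammaFn_zero : GammaFn 0 = 0 := by unfold GammaFn; norm_num

lemma rpow_half_eq_sqrt (u : ℝ) : u ^ ((1:ℝ)/2) = Real.sqrt u := by
  rw [Real.sqrt_eq_rpow]

-- derivative of Rf
def DR (p : ℝ × ℝ) : ℝ × ℝ →L[ℝ] ℝ :=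
  (2*p.1) • (ContinuousLinearMap.fst ℝ ℝ ℝ) + (2*p.2) • (ContinuousLinearMap.snd ℝ ℝ ℝ)

lemma hasFDerivAt_Rf (p : ℝ × ℝ) : HasFDerivAt Rf (DR p) p := by
  have hf : HasFDerivAt (fun q : ℝ×ℝ => q.1) (ContinuousLinearMap.fst ℝ ℝ ℝ) p := hasFDerivAt_fst
  have hs : HasFDerivAt (fun q : ℝ×ℝ => q.2) (ContinuousLinearMap.snd ℝ ℝ ℝ) p := hasFDerivAt_snd
  have h := (hf.mul hf).add (hs.mul hs)
  have hfun : Rf = fun q : ℝ×ℝ => q.1*q.1 + q.2*q.2 := by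
    funext q; unfold Rf; ring
  rw [hfun]
  refine h.congr_fderiv ?_
  apply ContinuousLinearMap.ext
  intro v
  simp [DR]
  ring

lemma continuous_DR : Continuous DR := by
  unfold DR
  exact ((continuous_const.mul continuous_fst).smul continuous_const).add
    ((continuous_const.mul continuous_snd).smul continuous_const)

lemma norm_DR_le (p : ℝ × ℝ) : ‖DR p‖ ≤ 2*|p.1| + 2*|p.2| := by
  apply ContinuousLinearMap.opNorm_le_bound _ (by positivity)
  intro v
  have hv1 : |v.1| ≤ ‖v‖ := by
    have := norm_fst_le v; simpa [Real.norm_eq_abs] using this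
  have hv2 : |v.2| ≤ ‖v‖ := by
    have := norm_snd_le v; simpa [Real.norm_eq_abs] using this
  have hDR : DR p v = 2*p.1*v.1 + 2*p.2*v.2 := by
    simp [DR]
    try ring
  rw [hDR, Real.norm_eq_abs]
  have h1 := abs_add_le (2*p.1*v.1) (2*p.2*v.2)
  have h2 : |2*p.1*v.1| = 2 * |p.1| * |v.1| := by
    rw [abs_mul, abs_mul]; norm_num
  have h3 : |2*p.2*v.2| = 2 * |p.2| * |v.2| := by
    rw [abs_mul, abs_mul]; norm_num
  nlinarith [abs_nonneg p.1, abs_nonneg p.2, abs_nonneg v.1, abs_nonneg v.2, norm_nonneg v]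

-- derivative of bf
lemma hasDerivAt_bf {u : ℝ} (hu : u ≠ 0) : HasDerivAt bf (-(1/2) * u⁻¹) u := by
  unfold bf
  exact (Real.hasDerivAt_log hu).const_mul (-(1/2))

def Gd (u : ℝ) : ℝ := (1/2) * bf u ^ (-(3:ℝ)/2) + (3/4) * bf u ^ (-(5:ℝ)/2)

lemma Gd_nonneg {u : ℝ} (h0 : 0 < u) (h1 : u < 1) : 0 ≤ Gd u := by
  have hb := bf_pos h0 h1
  unfold Gd
  have g1 : (0:ℝ) ≤ bf u ^ (-(3:ℝ)/2) := Real.rpow_nonneg hb.le _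
  have g2 : (0:ℝ) ≤ bf u ^ (-(5:ℝ)/2) := Real.rpow_nonneg hb.le _
  nlinarith

lemma hasDerivAt_Gf {u : ℝ} (h0 : 0 < u) (h1 : u < 1) :
    HasDerivAt Gf (u ^ (-(1:ℝ)/2) * Gd u) u := by
  have hb := bf_pos h0 h1
  -- deriv of u ^ (1/2)
  have h2 : HasDerivAt (fun v : ℝ => v ^ ((1:ℝ)/2)) ((1/2) * u ^ ((1:ℝ)/2 - 1)) u :=
    Real.hasDerivAt_rpow_const (Or.inl h0.ne')
  -- deriv of bf v ^ (-(3/2))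
  have h3 : HasDerivAt (fun b : ℝ => b ^ (-(3:ℝ)/2)) ((-(3:ℝ)/2) * bf u ^ (-(3:ℝ)/2 - 1)) (bf u) :=
    Real.hasDerivAt_rpow_const (Or.inl hb.ne')
  have h4 : HasDerivAt (fun v : ℝ => bf v ^ (-(3:ℝ)/2))
      ((-(3:ℝ)/2) * bf u ^ (-(3:ℝ)/2 - 1) * (-(1/2) * u⁻¹)) u := by
    have := h3.comp u (hasDerivAt_bf h0.ne')
    exact this
  have h5 := h2.mul h4
  have key : ((1:ℝ)/2) * u ^ ((1:ℝ)/2 - 1) * bf u ^ (-(3:ℝ)/2)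
      + u ^ ((1:ℝ)/2) * ((-(3:ℝ)/2) * bf u ^ (-(3:ℝ)/2 - 1) * (-(1/2) * u⁻¹))
      = u ^ (-(1:ℝ)/2) * Gd u := by
    have e1 : u ^ ((1:ℝ)/2 - 1) = u ^ (-(1:ℝ)/2) := by norm_num
    have e2 : bf u ^ (-(3:ℝ)/2 - 1) = bf u ^ (-(5:ℝ)/2) := by norm_num
    have e3 : u ^ ((1:ℝ)/2) * u⁻¹ = u ^ (-(1:ℝ)/2) := by
      rw [show u⁻¹ = u ^ (-1:ℝ) by rw [Real.rpow_neg_one], ← Real.rpow_add h0]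
      norm_num
    rw [e1, e2]
    unfold Gd
    rw [show u ^ ((1:ℝ)/2) * ((-(3:ℝ)/2) * bf u ^ (-(5:ℝ)/2) * (-(1/2) * u⁻¹))
        = (u ^ ((1:ℝ)/2) * u⁻¹) * ((3/4) * bf u ^ (-(5:ℝ)/2)) by ring, e3]
    ring
  rw [key] at h5
  exact h5

def Fd (p : ℝ × ℝ) : ℝ × ℝ →L[ℝ] ℝ :=
  if Rf p = 0 then 0 else (Rf p ^ (-(1:ℝ)/2) * Gd (Rf p)) • DR p

lemma hasFDerivAt_gammaFn_ne {p : ℝ × ℝ} (h0 : 0 < Rf p) (h1 : Rf p < 1) :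
    HasFDerivAt GammaFn (Fd p) p := by
  have hcomp := (hasDerivAt_Gf h0 h1).comp_hasFDerivAt p (hasFDerivAt_Rf p)
  have heq : GammaFn =ᶠ[nhds p] fun q => Gf (Rf q) := by
    have hop : IsOpen {q : ℝ×ℝ | Rf q ≠ 0} := isOpen_ne.preimage continuous_Rf
    filter_upwards [hop.mem_nhds h0.ne'] with q hq
    exact gammaFn_eq hq
  have := hcomp.congr_of_eventuallyEq heq
  unfold Fd
  rw [if_neg h0.ne']
  exact this

-- tendsto lemmas
lemma tendsto_bf_atTop : Tendsto bf (nhdsWithin (0:ℝ) (Ioi 0)) atTop := by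
  have h := Real.tendsto_log_nhdsGT_zero
  have h2 := (tendsto_const_mul_atTop_of_neg (l := nhdsWithin (0:ℝ) (Ioi 0))
    (f := Real.log) (by norm_num : (-1/2 : ℝ) < 0)).mpr h
  apply h2.congr
  intro u
  unfold bf; norm_num

lemma tendsto_bpow (e : ℝ) (he : 0 < e) :
    Tendsto (fun u : ℝ => bf u ^ (-e)) (nhdsWithin (0:ℝ) (Ioi 0)) (nhds 0) :=
  (tendsto_rpow_neg_atTop he).comp tendsto_bf_atTop

/-- key composition lemma -/
lemma tendsto_comp_Rf (F : ℝ → ℝ) (hF : Tendsto F (nhdsWithin (0:ℝ) (Ioi 0)) (nhds 0)) :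
    Tendsto (fun p : ℝ×ℝ => if Rf p = 0 then 0 else F (Rf p)) (nhds (0:ℝ×ℝ)) (nhds 0) := by
  have hR : Tendsto Rf (nhds (0:ℝ×ℝ)) (nhdsWithin (0:ℝ) (Ici 0)) := by
    rw [tendsto_nhdsWithin_iff]
    constructor
    · have := continuous_Rf.tendsto 0
      simpa [Rf] using this
    · exact Eventually.of_forall Rf_nonneg
  have hmain : Tendsto (fun u : ℝ => if u = 0 then 0 else F u)
      (nhdsWithin (0:ℝ) (Ici 0)) (nhds 0) := by
    have hsplit : Ici (0:ℝ) = Ioi 0 ∪ {0} := by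
      ext z; simp [le_iff_lt_or_eq, or_comm, eq_comm]
    rw [hsplit, nhdsWithin_union, nhdsWithin_singleton, tendsto_sup]
    constructor
    · apply hF.congr'
      filter_upwards [self_mem_nhdsWithin] with u hu
      rw [if_neg (ne_of_gt hu)]
    · have : (fun u : ℝ => if u = 0 then 0 else F u) 0 = 0 := by simp
      have h00 : (if (0:ℝ) = 0 then (0:ℝ) else F 0) = 0 := by simp
      have h01 := tendsto_pure_nhds (fun u : ℝ => if u = 0 then 0 else F u) 0
      simp only [h00] at h01 ⊢
      exact h01
  exact hmain.comp hR

lemma hasFDerivAt_gammaFn_zero : HasFDerivAt GammaFn (0 : ℝ × ℝ →L[ℝ] ℝ) 0 := by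
  rw [hasFDerivAt_iff_isLittleO_nhds_zero]
  rw [Asymptotics.isLittleO_iff]
  intro c hc
  have htd := tendsto_comp_Rf (fun u => Real.sqrt 2 * bf u ^ (-(3:ℝ)/2))
    (by
      have h32 : Tendsto (fun u : ℝ => bf u ^ (-(3:ℝ)/2)) (nhdsWithin (0:ℝ) (Ioi 0)) (nhds 0) := by
        have := tendsto_bpow (3/2) (by norm_num)
        convert this using 2 with u
        norm_num
      have := h32.const_mul (Real.sqrt 2)
      simpa using this)
  have hev1 : ∀ᶠ (h : ℝ×ℝ) in nhds 0,
      |if Rf h = 0 then 0 else Real.sqrt 2 * bf (Rf h) ^ (-(3:ℝ)/2)| < c := by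
    have := htd.eventually (eventually_abs_sub_lt 0 hc)
    simpa using this
  have hev2 : ∀ᶠ (h : ℝ×ℝ) in nhds 0, Rf h < 1 := by
    have hcont : ContinuousAt Rf 0 := continuous_Rf.continuousAt
    have : Rf 0 < 1 := by norm_num [Rf]
    exact hcont.eventually_lt continuousAt_const this
  filter_upwards [hev1, hev2] with p hp1 hp2
  simp only [zero_add, gammaFn_zero, ContinuousLinearMap.zero_apply, sub_zero, Real.norm_eq_abs]
  rcases eq_or_ne (Rf p) 0 with h0 | h0
  · rw [Rf_eq_zero h0, gammaFn_zero]
    simp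
  · have hRpos : 0 < Rf p := lt_of_le_of_ne (Rf_nonneg p) (Ne.symm h0)
    have hb := bf_pos hRpos hp2
    have hΓ : GammaFn p = Rf p ^ ((1:ℝ)/2) * bf (Rf p) ^ (-(3:ℝ)/2) := gammaFn_eq h0
    have hg0 : (0:ℝ) ≤ bf (Rf p) ^ (-(3:ℝ)/2) := Real.rpow_nonneg hb.le _
    have hx : |p.1| ≤ ‖p‖ := by
      have := norm_fst_le p; simpa [Real.norm_eq_abs] using this
    have hy : |p.2| ≤ ‖p‖ := by
      have := norm_snd_le p; simpa [Real.norm_eq_abs] using this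
    have hR2 : Rf p ≤ 2 * ‖p‖^2 := by
      unfold Rf
      nlinarith [abs_nonneg p.1, abs_nonneg p.2, norm_nonneg p, sq_abs p.1, sq_abs p.2]
    have hsq : Rf p ^ ((1:ℝ)/2) ≤ Real.sqrt 2 * ‖p‖ := by
      rw [← Real.sqrt_eq_rpow]
      calc Real.sqrt (Rf p) ≤ Real.sqrt (2 * ‖p‖^2) := Real.sqrt_le_sqrt hR2
        _ = Real.sqrt 2 * ‖p‖ := by
            rw [Real.sqrt_mul (by norm_num), Real.sqrt_sq (norm_nonneg p)]
    have hlt : Real.sqrt 2 * bf (Rf p) ^ (-(3:ℝ)/2) < c := by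
      rw [if_neg h0] at hp1
      calc Real.sqrt 2 * bf (Rf p) ^ (-(3:ℝ)/2)
          ≤ |Real.sqrt 2 * bf (Rf p) ^ (-(3:ℝ)/2)| := le_abs_self _
        _ < c := hp1
    have hΓnn : 0 ≤ GammaFn p := by
      rw [hΓ]; positivity
    rw [abs_of_nonneg hΓnn, hΓ]
    calc Rf p ^ ((1:ℝ)/2) * bf (Rf p) ^ (-(3:ℝ)/2)
        ≤ (Real.sqrt 2 * ‖p‖) * bf (Rf p) ^ (-(3:ℝ)/2) := by
          apply mul_le_mul_of_nonneg_right hsq hg0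
      _ = ‖p‖ * (Real.sqrt 2 * bf (Rf p) ^ (-(3:ℝ)/2)) := by ring
      _ ≤ ‖p‖ * c := by
          apply mul_le_mul_of_nonneg_left hlt.le (norm_nonneg p)
      _ = c * ‖p‖ := by ring

lemma Fd_zero : Fd 0 = 0 := by
  unfold Fd
  norm_num [Rf]

lemma hasFDerivAt_gammaFn {p : ℝ×ℝ} (h1 : Rf p < 1) : HasFDerivAt GammaFn (Fd p) p := by
  rcases eq_or_ne (Rf p) 0 with h0|h0
  · have hp := Rf_eq_zero h0
    subst hp
    rw [Fd_zero]
    exact hasFDerivAt_gammaFn_zero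
  · exact hasFDerivAt_gammaFn_ne (lt_of_le_of_ne (Rf_nonneg p) (Ne.symm h0)) h1

lemma abs_le_sqrt_Rf_fst (p : ℝ×ℝ) : |p.1| ≤ Real.sqrt (Rf p) := by
  rw [← Real.sqrt_sq_eq_abs]
  apply Real.sqrt_le_sqrt
  unfold Rf; nlinarith [sq_nonneg p.2]

lemma abs_le_sqrt_Rf_snd (p : ℝ×ℝ) : |p.2| ≤ Real.sqrt (Rf p) := by
  rw [← Real.sqrt_sq_eq_abs]
  apply Real.sqrt_le_sqrt
  unfold Rf; nlinarith [sq_nonneg p.1]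

lemma continuousAt_Fd {p : ℝ×ℝ} (h1 : Rf p < 1) : ContinuousAt Fd p := by
  rcases eq_or_ne (Rf p) 0 with h0|h0
  · have hp := Rf_eq_zero h0
    subst hp
    unfold ContinuousAt
    rw [Fd_zero]
    apply squeeze_zero_norm' (a := fun q : ℝ×ℝ =>
      if Rf q = 0 then 0 else 2 * bf (Rf q) ^ (-(3:ℝ)/2) + 3 * bf (Rf q) ^ (-(5:ℝ)/2))
    · have hev : ∀ᶠ (q : ℝ×ℝ) in nhds 0, Rf q < 1 := by
        have hcont : ContinuousAt Rf 0 := continuous_Rf.continuousAt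
        have h00 : Rf 0 < 1 := by norm_num [Rf]
        exact hcont.eventually_lt continuousAt_const h00
      filter_upwards [hev] with q hq
      rcases eq_or_ne (Rf q) 0 with hq0|hq0
      · rw [if_pos hq0]
        unfold Fd
        rw [if_pos hq0]
        simp
      · rw [if_neg hq0]
        have hqpos : 0 < Rf q := lt_of_le_of_ne (Rf_nonneg q) (Ne.symm hq0)
        have hb := bf_pos hqpos hq
        have hsq : (0:ℝ) < Real.sqrt (Rf q) := Real.sqrt_pos.mpr hqpos
        unfold Fd
        rw [if_neg hq0]
        have hrinv : Rf q ^ (-(1:ℝ)/2) = (Real.sqrt (Rf q))⁻¹ := by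
          rw [show (-(1:ℝ)/2) = -((1:ℝ)/2) by norm_num, Real.rpow_neg hqpos.le,
            rpow_half_eq_sqrt]
        have hGd := Gd_nonneg hqpos hq
        have hc : (0:ℝ) ≤ Rf q ^ (-(1:ℝ)/2) * Gd (Rf q) := by
          have : (0:ℝ) ≤ Rf q ^ (-(1:ℝ)/2) := Real.rpow_nonneg hqpos.le _
          exact mul_nonneg this hGd
        have hDR := norm_DR_le q
        have hDR4 : ‖DR q‖ ≤ 4 * Real.sqrt (Rf q) := by
          nlinarith [abs_le_sqrt_Rf_fst q, abs_le_sqrt_Rf_snd q]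
        refine le_trans (norm_smul_le (Rf q ^ (-(1:ℝ)/2) * Gd (Rf q)) (DR q)) ?_
        rw [Real.norm_eq_abs, abs_of_nonneg hc]
        calc Rf q ^ (-(1:ℝ)/2) * Gd (Rf q) * ‖DR q‖
            ≤ Rf q ^ (-(1:ℝ)/2) * Gd (Rf q) * (4 * Real.sqrt (Rf q)) := by
              apply mul_le_mul_of_nonneg_left hDR4 hc
          _ = ((Real.sqrt (Rf q))⁻¹ * Real.sqrt (Rf q)) * (4 * Gd (Rf q)) := by
              rw [hrinv]; ring
          _ = 4 * Gd (Rf q) := by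
              rw [inv_mul_cancel₀ hsq.ne']; ring
          _ = 2 * bf (Rf q) ^ (-(3:ℝ)/2) + 3 * bf (Rf q) ^ (-(5:ℝ)/2) := by
              unfold Gd; ring
    · apply tendsto_comp_Rf (fun u => 2 * bf u ^ (-(3:ℝ)/2) + 3 * bf u ^ (-(5:ℝ)/2))
      have h32 : Tendsto (fun u : ℝ => bf u ^ (-(3:ℝ)/2)) (nhdsWithin (0:ℝ) (Ioi 0)) (nhds 0) := by
        have := tendsto_bpow (3/2) (by norm_num)
        convert this using 2 with u
        norm_num
      have h52 : Tendsto (fun u : ℝ => bf u ^ (-(5:ℝ)/2)) (nhdsWithin (0:ℝ) (Ioi 0)) (nhds 0) := by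
        have := tendsto_bpow (5/2) (by norm_num)
        convert this using 2 with u
        norm_num
      have := (h32.const_mul 2).add (h52.const_mul 3)
      simpa using this
  · have hqpos : 0 < Rf p := lt_of_le_of_ne (Rf_nonneg p) (Ne.symm h0)
    have hb := bf_pos hqpos h1
    have hev : Fd =ᶠ[nhds p] (fun q => (Rf q ^ (-(1:ℝ)/2) * Gd (Rf q)) • DR q) := by
      have hop : IsOpen {q : ℝ×ℝ | Rf q ≠ 0} := isOpen_ne.preimage continuous_Rf
      filter_upwards [hop.mem_nhds h0] with q hq
      unfold Fd
      rw [if_neg hq]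
    have hcont : ContinuousAt (fun q => (Rf q ^ (-(1:ℝ)/2) * Gd (Rf q)) • DR q) p := by
      apply ContinuousAt.fun_smul
      · apply ContinuousAt.mul
        · exact (continuous_Rf.continuousAt).rpow_const (Or.inl h0)
        · unfold Gd
          have hbf : ContinuousAt (fun q : ℝ×ℝ => bf (Rf q)) p := by
            unfold bf
            exact (continuousAt_const.mul
              ((Real.continuousAt_log h0).comp continuous_Rf.continuousAt))
          apply ContinuousAt.add
          · exact continuousAt_const.mul (hbf.rpow_const (Or.inl hb.ne'))
          · exact continuousAt_const.mul (hbf.rpow_const (Or.inl hb.ne'))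
      · exact continuous_DR.continuousAt
    exact hcont.congr hev.symm

lemma contDiffOn_gammaFn : ContDiffOn ℝ 1 GammaFn {p : ℝ×ℝ | p.1^2+p.2^2 < 1} := by
  have hU : IsOpen {p : ℝ×ℝ | Rf p < 1} := isOpen_lt continuous_Rf continuous_const
  have hset : {p : ℝ×ℝ | p.1^2+p.2^2 < 1} = {p : ℝ×ℝ | Rf p < 1} := rfl
  rw [hset]
  rw [show (1 : WithTop ℕ∞) = 0 + 1 from (zero_add 1).symm]
  rw [contDiffOn_succ_iff_fderiv_of_isOpen hU]
  refine ⟨fun p hp => (hasFDerivAt_gammaFn hp).differentiableAt.differentiableWithinAt,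
    by simp, ?_⟩
  rw [contDiffOn_zero]
  exact (continuousOn_of_forall_continuousAt (fun p hp => continuousAt_Fd hp)).congr
    (fun p hp => ((hasFDerivAt_gammaFn hp).fderiv))

-- ### stage 3: linear maps and jacobians

def Lmap : ℝ×ℝ →L[ℝ] ℝ×ℝ :=
  (ContinuousLinearMap.fst ℝ ℝ ℝ).prod
    ((ContinuousLinearMap.fst ℝ ℝ ℝ) + (ContinuousLinearMap.snd ℝ ℝ ℝ))

def Smap : ℝ×ℝ →L[ℝ] ℝ×ℝ :=
  (ContinuousLinearMap.snd ℝ ℝ ℝ).prod (ContinuousLinearMap.fst ℝ ℝ ℝ)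

lemma hasFDerivAt_Xstar (p : ℝ×ℝ) :
    HasFDerivAt (fun p : ℝ×ℝ => ((p.2, p.1) : ℝ×ℝ)) Smap p := by
  exact (hasFDerivAt_snd).prodMk (hasFDerivAt_fst)

lemma hasFDerivAt_lin (p : ℝ×ℝ) :
    HasFDerivAt (fun p : ℝ×ℝ => ((p.1, p.1 + p.2) : ℝ×ℝ)) Lmap p := by
  exact (hasFDerivAt_fst).prodMk ((hasFDerivAt_fst).add (hasFDerivAt_snd))

lemma hasFDerivAt_Ystar_zero :
    HasFDerivAt (fun p : ℝ×ℝ =>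
      ((p.1 + (1/2) * GammaFn p, p.1 + p.2 + (1/2) * GammaFn p) : ℝ×ℝ)) Lmap 0 := by
  have hc : HasDerivAt (fun _ : ℝ => (0:ℝ)) 0 0 := hasDerivAt_const _ _
  have hΓ : HasFDerivAt (fun p : ℝ×ℝ => (1/2) * GammaFn p) (0 : ℝ×ℝ →L[ℝ] ℝ) 0 := by
    have := hasFDerivAt_gammaFn_zero.const_mul (1/2)
    simpa using this
  have h1 : HasFDerivAt (fun p : ℝ×ℝ => p.1 + (1/2) * GammaFn p)
      ((ContinuousLinearMap.fst ℝ ℝ ℝ) + 0) 0 := hasFDerivAt_fst.add hΓ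
  have h2 : HasFDerivAt (fun p : ℝ×ℝ => p.1 + p.2 + (1/2) * GammaFn p)
      (((ContinuousLinearMap.fst ℝ ℝ ℝ) + (ContinuousLinearMap.snd ℝ ℝ ℝ)) + 0) 0 :=
    ((hasFDerivAt_fst).add (hasFDerivAt_snd)).add hΓ
  have := h1.prodMk h2
  refine this.congr_fderiv ?_
  apply ContinuousLinearMap.ext
  intro v
  simp [Lmap]

-- ### MVT helpers

lemma mono_pair {s : Set ℝ} (hs : s.OrdConnected) {f g f' g' : ℝ → ℝ}
    (hf : ∀ x ∈ s, HasDerivAt f (f' x) x) (hg : ∀ x ∈ s, HasDerivAt g (g' x) x)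
    (hle : ∀ x ∈ s, f' x ≤ g' x) {a b : ℝ} (ha : a ∈ s) (hb : b ∈ s) (hab : a ≤ b) :
    f b - f a ≤ g b - g a := by
  have hIcc : Icc a b ⊆ s := hs.out ha hb
  have hmono : MonotoneOn (fun x => g x - f x) (Icc a b) := by
    apply monotoneOn_of_deriv_nonneg (convex_Icc a b)
    · intro x hx
      exact ((hg x (hIcc hx)).sub (hf x (hIcc hx))).continuousAt.continuousWithinAt
    · intro x hx
      have hx' : x ∈ s := hIcc (interior_subset hx)
      exact ((hg x hx').sub (hf x hx')).differentiableAt.differentiableWithinAt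
    · intro x hx
      have hx' : x ∈ s := hIcc (interior_subset hx)
      rw [((hg x hx').fun_sub (hf x hx')).deriv]
      linarith [hle x hx']
  have := hmono (left_mem_Icc.mpr hab) (right_mem_Icc.mpr hab) hab
  simp only at this
  linarith

lemma mono_single {s : Set ℝ} (hs : s.OrdConnected) {g g' : ℝ → ℝ}
    (hg : ∀ x ∈ s, HasDerivAt g (g' x) x) (hle : ∀ x ∈ s, 0 ≤ g' x)
    {a b : ℝ} (ha : a ∈ s) (hb : b ∈ s) (hab : a ≤ b) : g a ≤ g b := by
  have := mono_pair hs (f := fun _ => (0:ℝ)) (f' := fun _ => (0:ℝ))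
    (fun x _ => hasDerivAt_const _ _) hg hle ha hb hab
  linarith

-- sign-of-derivative contradiction helpers
lemma pos_deriv_right {f : ℝ → ℝ} {d s b : ℝ} (hsb : s < b)
    (hf : HasDerivAt f d s) (hd : 0 < d) (h0 : f s = 0)
    (hnp : ∀ t ∈ Ioc s b, f t ≤ 0) : False := by
  have hslope := hasDerivAt_iff_tendsto_slope.mp hf
  have hev : ∀ᶠ t in nhdsWithin s (Ioi s), 0 < slope f s t := by
    have h1 : ∀ᶠ t in nhdsWithin s ({s}ᶜ), 0 < slope f s t :=
      hslope.eventually (eventually_gt_nhds hd)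
    exact h1.filter_mono (nhdsWithin_mono s (fun t ht => ne_of_gt ht))
  have hmem : Ioc s b ∈ nhdsWithin s (Ioi s) := Ioc_mem_nhdsGT_of_mem ⟨le_refl s, hsb⟩
  rcases (hev.and (eventually_of_mem hmem (fun t ht => ht))).exists with ⟨t, ht1, ht2⟩
  have hts : s < t := ht2.1
  rw [slope_def_field, h0, sub_zero] at ht1
  have : 0 < f t := by
    have := mul_pos ht1 (sub_pos.mpr hts)
    rwa [div_mul_cancel₀ _ (ne_of_gt (sub_pos.mpr hts))] at this
  linarith [hnp t ht2]

lemma neg_deriv_left {f : ℝ → ℝ} {d a s : ℝ} (has : a < s)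
    (hf : HasDerivAt f d s) (hd : d < 0) (h0 : f s = 0)
    (hnp : ∀ t ∈ Ico a s, f t ≤ 0) : False := by
  have hslope := hasDerivAt_iff_tendsto_slope.mp hf
  have hev : ∀ᶠ t in nhdsWithin s (Iio s), slope f s t < 0 := by
    have h1 : ∀ᶠ t in nhdsWithin s ({s}ᶜ), slope f s t < 0 :=
      hslope.eventually (eventually_lt_nhds hd)
    exact h1.filter_mono (nhdsWithin_mono s (fun t ht => ne_of_lt ht))
  have hmem : Ico a s ∈ nhdsWithin s (Iio s) := Ico_mem_nhdsLT_of_mem ⟨has, le_refl s⟩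
  rcases (hev.and (eventually_of_mem hmem (fun t ht => ht))).exists with ⟨t, ht1, ht2⟩
  have hts : t < s := ht2.2
  rw [slope_def_field, h0, sub_zero] at ht1
  have : 0 < f t := by
    have hneg : t - s < 0 := sub_neg.mpr hts
    have := mul_pos_of_neg_of_neg ht1 hneg
    rwa [div_mul_cancel₀ _ (ne_of_lt hneg)] at this
  linarith [hnp t ht2]

-- components of a solution
lemma hasDerivAt_fst_comp {δ : ℝ → ℝ×ℝ} {v : ℝ×ℝ} {s : ℝ} (h : HasDerivAt δ v s) :
    HasDerivAt (fun t => (δ t).1) v.1 s := by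
  have := (hasFDerivAt_fst (p := δ s)).comp_hasDerivAt s h
  exact this

lemma hasDerivAt_snd_comp {δ : ℝ → ℝ×ℝ} {v : ℝ×ℝ} {s : ℝ} (h : HasDerivAt δ v s) :
    HasDerivAt (fun t => (δ t).2) v.2 s := by
  have := (hasFDerivAt_snd (p := δ s)).comp_hasDerivAt s h
  exact this

-- ### stage 4 prep : Gamma value lemmas

lemma rpow_neg_three_half {b : ℝ} (hb : 0 < b) :
    b ^ (-(3:ℝ)/2) = (b * Real.sqrt b)⁻¹ := by
  have h1 : b ^ ((3:ℝ)/2) = b * Real.sqrt b := by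
    have h : ((3:ℝ)/2) = 1 + 1/2 := by norm_num
    rw [h, Real.rpow_add hb, Real.rpow_one, Real.sqrt_eq_rpow]
  have h2 : (-(3:ℝ)/2) = -((3:ℝ)/2) := by norm_num
  rw [h2, Real.rpow_neg hb.le, h1]

def gfn (u : ℝ) : ℝ := (bf u * Real.sqrt (bf u))⁻¹

lemma gfn_pos {u : ℝ} (hb : 0 < bf u) : 0 < gfn u := by
  unfold gfn
  have := Real.sqrt_pos.mpr hb
  positivity

lemma gammaFn_eq_sqrt {p : ℝ × ℝ} (h0 : 0 < Rf p) (h1 : Rf p < 1) :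
    GammaFn p = Real.sqrt (Rf p) * gfn (Rf p) := by
  rw [gammaFn_eq h0.ne', Gf, rpow_half_eq_sqrt, rpow_neg_three_half (bf_pos h0 h1)]
  rfl

lemma g_le_eighth {u : ℝ} (hb : 4 ≤ bf u) : gfn u ≤ 1/8 := by
  have h2 : (2:ℝ) ≤ Real.sqrt (bf u) := by
    rw [show (2:ℝ) = Real.sqrt 4 by
      rw [show (4:ℝ) = 2^2 by norm_num, Real.sqrt_sq]; norm_num]
    exact Real.sqrt_le_sqrt hb
  have h8 : (8:ℝ) ≤ bf u * Real.sqrt (bf u) := by nlinarith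
  unfold gfn
  rw [inv_le_comm₀ (by nlinarith) (by norm_num)]
  linarith

lemma bf_ge_four {u : ℝ} (h0 : 0 < u) (hu : u < Real.exp (-8)) : 4 ≤ bf u := by
  have h := Real.log_lt_log h0 hu
  rw [Real.log_exp] at h
  unfold bf; linarith

-- ### pointwise algebra lemmas

lemma ptP2 {x y r g Γ R : ℝ} (hR : R = x^2+y^2) (hΓ : Γ = r*g)
    (hg0 : 0 ≤ g) (hg8 : g ≤ 1/8) (hrpos : 0 < r) (hr2 : r^2 = R)
    (hx : |x| ≤ r) (hy : |y| ≤ r) :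
    (3/4)*R ≤ 2*x*(x + Γ/2) + 2*y*(x+y+Γ/2) ∧
      2*x*(x + Γ/2) + 2*y*(x+y+Γ/2) ≤ 4*R := by
  obtain ⟨hx1, hx2⟩ := abs_le.mp hx
  obtain ⟨hy1, hy2⟩ := abs_le.mp hy
  have hrg0 : 0 ≤ r*g := by positivity
  have hrg : r*g ≤ r*(1/8) := mul_le_mul_of_nonneg_left hg8 hrpos.le
  have hsum1 : -(2*r) ≤ x + y := by linarith
  have hsum2 : x + y ≤ 2*r := by linarith
  have hlow : -(r^2)/4 ≤ (x+y)*(r*g) := by nlinarith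
  have hhigh : (x+y)*(r*g) ≤ r^2/4 := by nlinarith
  constructor
  · nlinarith [sq_nonneg (x+y)]
  · nlinarith [sq_nonneg (x-y)]

lemma ptP3 {x y r g Γ R : ℝ} (hR : R = x^2+y^2) (hΓ : Γ = r*g)
    (hg0 : 0 < g) (hg8 : g ≤ 1/8) (hrpos : 0 < r) (hr2 : r^2 = R)
    (hx : |x| ≤ r) (hyneg : y < 0) (hRpos : 0 < R) :
    0 < x^2 + (x - y)*Γ/2 := by
  obtain ⟨hx1, hx2⟩ := abs_le.mp hx
  by_cases hc : y^2 ≤ x^2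
  · -- x² ≥ R/2, |x-y| ≤ 2r, term ≥ -r²/8
    have habs : |x - y| ≤ 2*r := by
      have : |y| ≤ r := by
        rw [← Real.sqrt_sq_eq_abs]
        rw [show r = Real.sqrt (r^2) from (Real.sqrt_sq hrpos.le).symm, hr2, hR]
        apply Real.sqrt_le_sqrt; nlinarith
      obtain ⟨hy1, hy2⟩ := abs_le.mp this
      rw [abs_le]; constructor <;> linarith
    obtain ⟨hd1, hd2⟩ := abs_le.mp habs
    have hrg0 : 0 ≤ r*g := by positivity
    have hrg : r*g ≤ r*(1/8) := mul_le_mul_of_nonneg_left hg8 hrpos.le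
    have hterm : -(r^2)/8 ≤ (x-y)*(r*g)/2 := by nlinarith
    nlinarith
  · push_neg at hc
    have hxy : x - y > 0 := by
      by_contra h
      push_neg at h
      have h' : 0 ≤ y - x := by linarith
      have h'' : 0 ≤ -(x+y) := by linarith
      nlinarith [mul_nonneg h' h'']
    have : 0 < (x-y)*(r*g)/2 := by positivity
    nlinarith [sq_nonneg x, hΓ]

lemma ptP4 {x y r : ℝ} (hxpos : 0 < x) (hyneg : y < 0) (hrpos : 0 ≤ r)
    (hr2 : r^2 = x^2 + y^2) : r ≤ x - y := by
  nlinarith [mul_pos hxpos (neg_pos.mpr hyneg)]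

lemma ptP5 {x y R : ℝ} (hyneg : y < 0) (hR : R = x^2 + y^2) :
    (x/(-y))^2/(1+(x/(-y))^2) = x^2/R := by
  have hy : y ≠ 0 := hyneg.ne
  have hRpos : 0 < R := by nlinarith [sq_nonneg x, sq_nonneg y, hyneg]
  field_simp
  rw [hR]; ring

def Yv (p : ℝ×ℝ) : ℝ×ℝ :=
  (p.1 + (1/2) * GammaFn p, p.1 + p.2 + (1/2) * GammaFn p)

lemma Rf_le_two_norm_sq (p : ℝ×ℝ) : Rf p ≤ 2*‖p‖^2 := by
  have h1 : |p.1| ≤ ‖p‖ := by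
    have := norm_fst_le p; simpa [Real.norm_eq_abs] using this
  have h2 : |p.2| ≤ ‖p‖ := by
    have := norm_snd_le p; simpa [Real.norm_eq_abs] using this
  unfold Rf
  have h1' : p.1^2 ≤ ‖p‖^2 := by
    nlinarith [mul_self_le_mul_self (abs_nonneg p.1) h1, sq_abs p.1]
  have h2' : p.2^2 ≤ ‖p‖^2 := by
    nlinarith [mul_self_le_mul_self (abs_nonneg p.2) h2, sq_abs p.2]
  linarith

set_option maxHeartbeats 1000000 in
theorem no_orbit (δ : ℝ → ℝ×ℝ) (J : Set ℝ) (hJord : J.OrdConnected)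
    (hsol : ∀ s ∈ J, HasDerivAt δ (Yv (δ s)) s)
    (hy : ∀ s ∈ J, (δ s).2 ≤ 0)
    (hne : ∀ s ∈ J, δ s ≠ 0)
    (hlim : ∀ ε > 0, ∃ s₀ ∈ J, ∀ s ∈ J, s ≤ s₀ → ‖δ s‖ < ε) : False := by
  classical
  -- no minimum
  have hnomin : ∀ s ∈ J, ∃ s' ∈ J, s' < s := by
    intro s hs
    by_contra hcon
    push_neg at hcon
    have hz : ∀ ε > 0, ‖δ s‖ < ε := by
      intro ε hε
      obtain ⟨s₀, hs₀, hp⟩ := hlim ε hε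
      exact hp s hs (hcon s₀ hs₀)
    have : δ s = 0 := by
      by_contra hne'
      have h0 : 0 < ‖δ s‖ := norm_pos_iff.mpr hne'
      exact absurd (hz _ h0) (lt_irrefl _)
    exact hne s hs this
  -- choose s₂
  have hε₂pos : 0 < Real.exp (-4) / 2 := by positivity
  obtain ⟨s₂, hs₂J, hs₂⟩ := hlim (Real.exp (-4) / 2) hε₂pos
  -- point facts on the tail
  have hRsmall : ∀ p : ℝ×ℝ, ‖p‖ < Real.exp (-4)/2 → Rf p < Real.exp (-8) := by
    intro p hp
    have h1 := Rf_le_two_norm_sq p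
    have h2 : ‖p‖^2 < (Real.exp (-4)/2)^2 := by
      have := norm_nonneg p
      nlinarith
    have h3 : (Real.exp (-4)/2)^2 = Real.exp (-8)/4 := by
      rw [div_pow, show Real.exp (-4)^2 = Real.exp (-8) by
        rw [sq, ← Real.exp_add]; norm_num]
      norm_num
    nlinarith [Real.exp_pos (-8)]
  have hRpos : ∀ s ∈ J, 0 < Rf (δ s) := by
    intro s hs
    rcases eq_or_lt_of_le (Rf_nonneg (δ s)) with h|h
    · exact absurd (Rf_eq_zero h.symm) (hne s hs)
    · exact h
  have hR8 : ∀ s ∈ J, s ≤ s₂ → Rf (δ s) < Real.exp (-8) := by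
    intro s hs hss
    exact hRsmall _ (hs₂ s hs hss)
  have hexp81 : Real.exp (-8) < 1 := by
    rw [Real.exp_lt_one_iff]; norm_num
  have hR1 : ∀ s ∈ J, s ≤ s₂ → Rf (δ s) < 1 := fun s hs hss =>
    lt_trans (hR8 s hs hss) hexp81
  have hb4 : ∀ s ∈ J, s ≤ s₂ → 4 ≤ bf (Rf (δ s)) := fun s hs hss =>
    bf_ge_four (hRpos s hs) (hR8 s hs hss)
  have hbpos : ∀ s ∈ J, s ≤ s₂ → 0 < bf (Rf (δ s)) := fun s hs hss =>
    lt_of_lt_of_le (by norm_num) (hb4 s hs hss)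
  have hg8 : ∀ s ∈ J, s ≤ s₂ → gfn (Rf (δ s)) ≤ 1/8 := fun s hs hss =>
    g_le_eighth (hb4 s hs hss)
  have hg0 : ∀ s ∈ J, s ≤ s₂ → 0 < gfn (Rf (δ s)) := fun s hs hss =>
    gfn_pos (hbpos s hs hss)
  have hΓval : ∀ s ∈ J, s ≤ s₂ →
      GammaFn (δ s) = Real.sqrt (Rf (δ s)) * gfn (Rf (δ s)) := fun s hs hss =>
    gammaFn_eq_sqrt (hRpos s hs) (hR1 s hs hss)
  -- derivatives of components
  have hdx : ∀ s ∈ J, HasDerivAt (fun t => (δ t).1)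
      ((δ s).1 + (1/2) * GammaFn (δ s)) s := by
    intro s hs
    have := hasDerivAt_fst_comp (hsol s hs)
    simpa [Yv] using this
  have hdy : ∀ s ∈ J, HasDerivAt (fun t => (δ t).2)
      ((δ s).1 + (δ s).2 + (1/2) * GammaFn (δ s)) s := by
    intro s hs
    have := hasDerivAt_snd_comp (hsol s hs)
    simpa [Yv] using this
  -- derivative of R
  have hdR : ∀ s ∈ J, HasDerivAt (fun t => (δ t).1^2 + (δ t).2^2)
      (2*(δ s).1*((δ s).1 + GammaFn (δ s)/2)
        + 2*(δ s).2*((δ s).1 + (δ s).2 + GammaFn (δ s)/2)) s := by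
    intro s hs
    have h := ((hdx s hs).mul (hdx s hs)).add ((hdy s hs).mul (hdy s hs))
    have h2 := h.congr_of_eventuallyEq (Eventually.of_forall
      (fun t => by ring : ∀ t, (δ t).1^2 + (δ t).2^2 = (δ t).1*(δ t).1 + (δ t).2*(δ t).2))
    refine h2.congr_deriv ?_
    ring
  -- derivative of log R
  have hdlog : ∀ s ∈ J, HasDerivAt (fun t => Real.log ((δ t).1^2 + (δ t).2^2))
      ((2*(δ s).1*((δ s).1 + GammaFn (δ s)/2)
        + 2*(δ s).2*((δ s).1 + (δ s).2 + GammaFn (δ s)/2)) / Rf (δ s)) s := by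
    intro s hs
    exact (hdR s hs).log (hRpos s hs).ne'
  -- bounds on R'
  have hD : ∀ s ∈ J, s ≤ s₂ →
      (3/4)*(Rf (δ s)) ≤ 2*(δ s).1*((δ s).1 + GammaFn (δ s)/2)
        + 2*(δ s).2*((δ s).1 + (δ s).2 + GammaFn (δ s)/2) ∧
      2*(δ s).1*((δ s).1 + GammaFn (δ s)/2)
        + 2*(δ s).2*((δ s).1 + (δ s).2 + GammaFn (δ s)/2) ≤ 4*(Rf (δ s)) := by
    intro s hs hss
    exact ptP2 (by rfl) (hΓval s hs hss) (hg0 s hs hss).le (hg8 s hs hss)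
      (Real.sqrt_pos.mpr (hRpos s hs)) (Real.sq_sqrt (Rf_nonneg _))
      (abs_le_sqrt_Rf_fst _) (abs_le_sqrt_Rf_snd _)
  have hlogd_ub : ∀ s ∈ J, s ≤ s₂ →
      (2*(δ s).1*((δ s).1 + GammaFn (δ s)/2)
        + 2*(δ s).2*((δ s).1 + (δ s).2 + GammaFn (δ s)/2)) / Rf (δ s) ≤ 4 := by
    intro s hs hss
    rw [div_le_iff₀ (hRpos s hs)]
    linarith [(hD s hs hss).2]
  have hlogd_lb : ∀ s ∈ J, s ≤ s₂ →
      0 ≤ (2*(δ s).1*((δ s).1 + GammaFn (δ s)/2)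
        + 2*(δ s).2*((δ s).1 + (δ s).2 + GammaFn (δ s)/2)) / Rf (δ s) := by
    intro s hs hss
    apply div_nonneg _ (hRpos s hs).le
    nlinarith [(hD s hs hss).1, (hRpos s hs)]
  -- W unbounded below
  have hWunb : ∀ b : ℝ, ∃ s, (s ∈ J ∧ s ≤ s₂) ∧ s < b := by
    intro b
    by_contra hcon
    push_neg at hcon
    have hbs₂ : b ≤ s₂ := hcon s₂ ⟨hs₂J, le_refl _⟩
    set η := Real.exp (Real.log (Rf (δ s₂)) - 4*(s₂ - b)) with hη
    have hηpos : 0 < η := Real.exp_pos _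
    have hηle : η ≤ Rf (δ s₂) := by
      rw [hη]
      calc Real.exp (Real.log (Rf (δ s₂)) - 4*(s₂ - b))
          ≤ Real.exp (Real.log (Rf (δ s₂))) := by
            apply Real.exp_le_exp.mpr; nlinarith
        _ = Rf (δ s₂) := Real.exp_log (hRpos s₂ hs₂J)
    have hWord : ({s | s ∈ J ∧ s ≤ s₂} : Set ℝ).OrdConnected := by
      have : ({s | s ∈ J ∧ s ≤ s₂} : Set ℝ) = J ∩ Iic s₂ := rfl
      rw [this]
      exact hJord.inter ordConnected_Iic
    have hlb : ∀ s, s ∈ J → s ≤ s₂ → η ≤ Rf (δ s) := by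
      intro s hsJ hss
      have h1 := mono_pair hWord
        (f := fun t => Real.log ((δ t).1^2 + (δ t).2^2)) (g := fun t => 4*t)
        (f' := fun t => (2*(δ t).1*((δ t).1 + GammaFn (δ t)/2)
          + 2*(δ t).2*((δ t).1 + (δ t).2 + GammaFn (δ t)/2)) / Rf (δ t))
        (g' := fun _ => 4)
        (fun t ht => hdlog t ht.1)
        (fun t _ => by simpa using (hasDerivAt_id t).const_mul 4)
        (fun t ht => hlogd_ub t ht.1 ht.2)
        (a := s) (b := s₂) ⟨hsJ, hss⟩ ⟨hs₂J, le_refl _⟩ hss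
      have h2 : b ≤ s := hcon s ⟨hsJ, hss⟩
      have h3 : Real.log η ≤ Real.log (Rf (δ s)) := by
        rw [hη, Real.log_exp]
        have : Real.log (Rf (δ s₂)) = Real.log ((δ s₂).1^2 + (δ s₂).2^2) := rfl
        have h4 : Real.log (Rf (δ s)) = Real.log ((δ s).1^2 + (δ s).2^2) := rfl
        rw [h4]
        linarith
      calc η = Real.exp (Real.log η) := (Real.exp_log hηpos).symm
        _ ≤ Real.exp (Real.log (Rf (δ s))) := Real.exp_le_exp.mpr h3
        _ = Rf (δ s) := Real.exp_log (hRpos s hsJ)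
    have hεη : 0 < min (Real.sqrt (η/2)) (Real.exp (-4)/2) := by
      apply lt_min _ hε₂pos
      apply Real.sqrt_pos.mpr; positivity
    obtain ⟨s₀, hs₀J, hp⟩ := hlim _ hεη
    have hsmall : ∀ s ∈ J, s ≤ s₀ → Rf (δ s) < η := by
      intro s hs hss
      have h1 := hp s hs hss
      have h2 : ‖δ s‖ < Real.sqrt (η/2) := lt_of_lt_of_le h1 (min_le_left _ _)
      have h3 : ‖δ s‖^2 < η/2 := by
        have h4 := Real.sq_sqrt (by positivity : (0:ℝ) ≤ η/2)
        nlinarith [norm_nonneg (δ s), Real.sqrt_nonneg (η/2)]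
      nlinarith [Rf_le_two_norm_sq (δ s)]
    rcases le_total s₀ s₂ with h|h
    · exact absurd (hlb s₀ hs₀J h) (not_le.mpr (hsmall s₀ hs₀J (le_refl _)))
    · exact absurd (hlb s₂ hs₂J (le_refl _)) (not_le.mpr (hsmall s₂ hs₂J h))
  -- Iic s₂ ⊆ J
  have hIic : Iic s₂ ⊆ J := by
    intro z hz
    obtain ⟨w, ⟨hwJ, _⟩, hwz⟩ := hWunb z
    exact hJord.out hwJ hs₂J ⟨le_of_lt hwz, hz⟩
  -- y < 0 strictly before s₂
  have hylt : ∀ s, s < s₂ → (δ s).2 < 0 := by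
    intro s hss
    have hsJ : s ∈ J := hIic (le_of_lt hss)
    rcases lt_or_eq_of_le (hy s hsJ) with h|h
    · exact h
    -- y s = 0
    exfalso
    have hy0 : (δ s).2 = 0 := h
    have hx2 : (δ s).1^2 = Rf (δ s) := by
      have : Rf (δ s) = (δ s).1^2 + (δ s).2^2 := rfl
      rw [this, hy0]; ring
    have hxne : (δ s).1 ≠ 0 := by
      intro h0
      have := hRpos s hsJ
      rw [← hx2, h0] at this
      norm_num at this
    have hΓ := hΓval s hsJ (le_of_lt hss)
    have hsqrtx : Real.sqrt (Rf (δ s)) = |(δ s).1| := by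
      rw [← hx2, Real.sqrt_sq_eq_abs]
    have hΓnn : 0 ≤ GammaFn (δ s) := by
      rw [hΓ]
      exact mul_nonneg (Real.sqrt_nonneg _) (hg0 s hsJ hss.le).le
    have hΓle : GammaFn (δ s) ≤ |(δ s).1| * (1/8) := by
      rw [hΓ, hsqrtx]
      exact mul_le_mul_of_nonneg_left (hg8 s hsJ hss.le) (abs_nonneg _)
    have hdys := hdy s hsJ
    rw [hy0, add_zero] at hdys
    rcases lt_or_gt_of_ne hxne with hneg|hpos
    · -- x < 0 : derivative negative, contradiction to the left
      have hd : (δ s).1 + (1/2)*GammaFn (δ s) < 0 := by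
        rw [abs_of_neg hneg] at hΓle
        linarith
      apply neg_deriv_left (a := s - 1) (by linarith) hdys hd hy0
      intro t ht
      exact hy t (hIic (le_of_lt (lt_trans ht.2 hss)))
    · -- x > 0 : derivative positive, contradiction to the right
      have hd : 0 < (δ s).1 + (1/2)*GammaFn (δ s) := by linarith
      apply pos_deriv_right (b := s₂) hss hdys hd hy0
      intro t ht
      exact hy t (hIic ht.2)
  -- the angle function
  set φ : ℝ → ℝ := fun t => Real.arctan ((δ t).1 / (-(δ t).2)) with hφdef
  have hdφ : ∀ s, s < s₂ → HasDerivAt φ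
      (((δ s).1^2 + ((δ s).1 - (δ s).2) * GammaFn (δ s)/2) / Rf (δ s)) s := by
    intro s hss
    have hsJ := hIic hss.le
    have hyneg := hylt s hss
    have hyne : -(δ s).2 ≠ 0 := by simpa using hyneg.ne
    have hu := HasDerivAt.div (hdx s hsJ) ((hdy s hsJ).neg) hyne
    have harc := (Real.hasDerivAt_arctan ((δ s).1 / (-(δ s).2))).comp s hu
    have harc2 : HasDerivAt φ
        ((1/(1+((δ s).1/(-(δ s).2))^2)) *
          ((((δ s).1 + 1/2*GammaFn (δ s)) * (-(δ s).2)
            - (δ s).1 * (-((δ s).1 + (δ s).2 + 1/2*GammaFn (δ s)))) / (-(δ s).2)^2)) s := by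
      simpa [Function.comp_def, hφdef] using harc
    convert harc2 using 1
    have hRe : Rf (δ s) = (δ s).1^2 + (δ s).2^2 := rfl
    have hyne2 : (δ s).2 ≠ 0 := hyneg.ne
    rw [hRe]
    have hden : (δ s).1^2 + (δ s).2^2 ≠ 0 := by
      have := hRpos s hsJ
      rw [hRe] at this
      exact this.ne'
    field_simp
    ring
  have hφd_pos : ∀ s, s < s₂ →
      0 < ((δ s).1^2 + ((δ s).1 - (δ s).2) * GammaFn (δ s)/2) / Rf (δ s) := by
    intro s hss
    have hsJ := hIic hss.le
    apply div_pos _ (hRpos s hsJ)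
    exact ptP3 rfl (hΓval s hsJ hss.le) (hg0 s hsJ hss.le) (hg8 s hsJ hss.le)
      (Real.sqrt_pos.mpr (hRpos s hsJ)) (Real.sq_sqrt (Rf_nonneg _))
      (abs_le_sqrt_Rf_fst _) (hylt s hss) (hRpos s hsJ)
  have hφmono : ∀ a b : ℝ, a < s₂ → b < s₂ → a ≤ b → φ a ≤ φ b := by
    intro a b ha hb hab
    exact mono_single ordConnected_Iio (fun t ht => hdφ t ht)
      (fun t ht => (hφd_pos t ht).le) ha hb hab
  have hφlb : ∀ s, -(Real.pi/2) < φ s := fun s => by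
    rw [hφdef]; exact Real.neg_pi_div_two_lt_arctan _
  have hφub : ∀ s, φ s < Real.pi/2 := fun s => by
    rw [hφdef]; exact Real.arctan_lt_pi_div_two _
  -- infimum of φ over Iio s₂
  set Φ := sInf (φ '' (Iio s₂)) with hΦdef
  have hbdd : BddBelow (φ '' Iio s₂) := by
    refine ⟨-(Real.pi/2), ?_⟩
    rintro v ⟨t, _, rfl⟩
    exact (hφlb t).le
  have hnonempty : (φ '' Iio s₂).Nonempty :=
    ⟨φ (s₂ - 1), ⟨s₂ - 1, by simp, rfl⟩⟩
  have hΦ_le : ∀ s, s < s₂ → Φ ≤ φ s := fun s hs => csInf_le hbdd ⟨s, hs, rfl⟩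
  have hΦ_approx : ∀ ε > 0, ∃ s, s < s₂ ∧ φ s < Φ + ε := by
    intro ε hε
    obtain ⟨v, ⟨t, ht, rfl⟩, hv⟩ := Real.lt_sInf_add_pos hnonempty hε
    exact ⟨t, ht, hv⟩
  -- R and g tend to zero along the tail
  have hRtail : ∀ ε > 0, ∃ s₀, s₀ < s₂ ∧ ∀ s ≤ s₀, Rf (δ s) < ε := by
    intro ε hε
    have hmin : 0 < min (Real.sqrt (ε/2)) (Real.exp (-4)/2) := by
      apply lt_min _ hε₂pos
      exact Real.sqrt_pos.mpr (by positivity)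
    obtain ⟨s₀', hs₀'J, hp⟩ := hlim _ hmin
    obtain ⟨w, ⟨hwJ, hws₂⟩, hww⟩ := hWunb (min s₀' s₂)
    have hw2 : w < s₂ := lt_of_lt_of_le hww (min_le_right _ _)
    refine ⟨w, hw2, ?_⟩
    intro s hs
    have hsJ : s ∈ J := hIic (le_trans hs hw2.le)
    have h1 := hp s hsJ (le_trans hs (le_of_lt (lt_of_lt_of_le hww (min_le_left _ _))))
    have h2 : ‖δ s‖ < Real.sqrt (ε/2) := lt_of_lt_of_le h1 (min_le_left _ _)
    have h3 : ‖δ s‖^2 < ε/2 := by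
      nlinarith [Real.sq_sqrt (le_of_lt (half_pos hε)), Real.sqrt_nonneg (ε/2),
        norm_nonneg (δ s)]
    nlinarith [Rf_le_two_norm_sq (δ s)]
  have hgtail : ∀ c, 0 < c → ∃ s₀, s₀ < s₂ ∧ ∀ s ≤ s₀, gfn (Rf (δ s)) ≤ c := by
    intro c hc
    obtain ⟨s₀, hs₀, hp⟩ := hRtail (Real.exp (-2 * max 1 (1/c))) (Real.exp_pos _)
    refine ⟨s₀, hs₀, fun s hs => ?_⟩
    have hsJ : s ∈ J := hIic (le_trans hs hs₀.le)
    have h1 := hp s hs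
    have hRp : 0 < Rf (δ s) := hRpos s hsJ
    have hbig : max 1 (1/c) ≤ bf (Rf (δ s)) := by
      have h2 := Real.log_lt_log hRp h1
      rw [Real.log_exp] at h2
      unfold bf
      nlinarith [le_max_left (1:ℝ) (1/c), le_max_right (1:ℝ) (1/c)]
    have hb1 : (1:ℝ) ≤ bf (Rf (δ s)) := le_trans (le_max_left _ _) hbig
    have hsq1 : (1:ℝ) ≤ Real.sqrt (bf (Rf (δ s))) := by
      rw [show (1:ℝ) = Real.sqrt 1 from (Real.sqrt_one).symm]
      exact Real.sqrt_le_sqrt hb1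
    have hprod : (1/c) ≤ bf (Rf (δ s)) * Real.sqrt (bf (Rf (δ s))) := by
      nlinarith [le_max_right (1:ℝ) (1/c)]
    have hppos : 0 < bf (Rf (δ s)) * Real.sqrt (bf (Rf (δ s))) := by nlinarith
    unfold gfn
    rw [inv_le_comm₀ hppos hc]
    rwa [← one_div]
  -- x²/R in terms of tan φ
  have hu_eq : ∀ s, s < s₂ → ((δ s).1/(-(δ s).2))^2/(1+((δ s).1/(-(δ s).2))^2)
      = (δ s).1^2 / Rf (δ s) := by
    intro s hs
    exact ptP5 (hylt s hs) rfl
  have htanφ : ∀ s, Real.tan (φ s) = (δ s).1 / (-(δ s).2) := by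
    intro s
    rw [hφdef]
    exact Real.tan_arctan _
  -- generic linear-growth contradiction
  have hmain : ∀ (c₁ : ℝ), 0 < c₁ → ∀ s₃, s₃ < s₂ →
      (∀ s, s ≤ s₃ → 2*c₁ ≤ (δ s).1^2 / Rf (δ s)) → False := by
    intro c₁ hc₁ s₃ hs₃ hlow
    obtain ⟨s₄, hs₄, hgb⟩ := hgtail c₁ hc₁
    set s₅ := min s₃ s₄ with hs₅def
    have hs₅2 : s₅ < s₂ := lt_of_le_of_lt (min_le_left _ _) hs₃
    have hder : ∀ s, s ≤ s₅ → c₁ ≤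
        ((δ s).1^2 + ((δ s).1 - (δ s).2) * GammaFn (δ s)/2) / Rf (δ s) := by
      intro s hs
      have hss₂ : s < s₂ := lt_of_le_of_lt hs hs₅2
      have hsJ := hIic hss₂.le
      have hR := hRpos s hsJ
      have hΓ := hΓval s hsJ hss₂.le
      have hsq := Real.sq_sqrt (Rf_nonneg (δ s))
      have hsqpos := Real.sqrt_pos.mpr hR
      have hgnn := (hg0 s hsJ hss₂.le).le
      have hbound : -(Rf (δ s) * gfn (Rf (δ s))) ≤ ((δ s).1 - (δ s).2) * GammaFn (δ s)/2 := by
        obtain ⟨h1, h2⟩ := abs_le.mp (abs_le_sqrt_Rf_fst (δ s))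
        obtain ⟨h3, h4⟩ := abs_le.mp (abs_le_sqrt_Rf_snd (δ s))
        rw [hΓ]
        nlinarith [mul_nonneg hsqpos.le hgnn, mul_nonneg (mul_nonneg hsqpos.le hsqpos.le) hgnn]
      have hglt := hgb s (le_trans hs (min_le_right _ _))
      have hlow' := hlow s (le_trans hs (min_le_left _ _))
      have h5 : -(gfn (Rf (δ s))) ≤ (((δ s).1 - (δ s).2) * GammaFn (δ s)/2)/Rf (δ s) := by
        rw [le_div_iff₀ hR]
        nlinarith
      have h6 : ((δ s).1^2 + ((δ s).1 - (δ s).2) * GammaFn (δ s)/2) / Rf (δ s)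
          = (δ s).1^2/Rf (δ s) + (((δ s).1 - (δ s).2) * GammaFn (δ s)/2)/Rf (δ s) := by
        ring
      rw [h6]
      linarith
    set s₆ := s₅ - (Real.pi + 1)/c₁ with hs₆def
    have hs₆le : s₆ ≤ s₅ := by
      rw [hs₆def]
      have h7 : 0 < (Real.pi+1)/c₁ := by positivity
      linarith
    have hpair := mono_pair (ordConnected_Iic (a := s₅))
      (f := fun t => c₁ * t) (g := φ) (f' := fun _ => c₁)
      (g' := fun s => ((δ s).1^2 + ((δ s).1 - (δ s).2) * GammaFn (δ s)/2) / Rf (δ s))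
      (fun t _ => by simpa using (hasDerivAt_id t).const_mul c₁)
      (fun t ht => hdφ t (lt_of_le_of_lt ht hs₅2))
      (fun t ht => hder t ht)
      (a := s₆) (b := s₅) hs₆le (le_refl s₅) hs₆le
    have heq : c₁*s₅ - c₁*s₆ = Real.pi + 1 := by
      rw [hs₆def]
      field_simp
      ring
    have hb1 := hφlb s₆
    have hb2 := hφub s₅
    linarith
  -- trichotomy on Φ
  have hΦub : Φ < Real.pi/2 := lt_of_le_of_lt (hΦ_le (s₂-1) (by linarith)) (hφub _)
  have hΦglb : -(Real.pi/2) ≤ Φ := by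
    apply le_csInf hnonempty
    rintro v ⟨t, _, rfl⟩
    exact (hφlb t).le
  rcases lt_trichotomy Φ 0 with hΦneg | hΦ0 | hΦpos
  · -- Φ < 0
    obtain ⟨s₆, hs₆2, hφs₆⟩ := hΦ_approx (-Φ/2) (by linarith)
    have hφs₆' : φ s₆ < Φ/2 := by linarith
    set T := Real.tan (Φ/2) with hTdef
    have hπ := Real.pi_pos
    have hTneg : T < 0 := by
      rw [hTdef]
      exact Real.tan_neg_of_neg_of_pi_div_two_lt (by linarith) (by linarith)
    have hc₁pos : 0 < T^2/(2*(1+T^2)) := by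
      have hT2 : 0 < T^2 := by nlinarith
      apply div_pos hT2 (by positivity)
    apply hmain _ hc₁pos s₆ hs₆2
    intro s hs
    have hss₂ : s < s₂ := lt_of_le_of_lt hs hs₆2
    have hφs : φ s ≤ Φ/2 := le_of_lt (lt_of_le_of_lt (hφmono s s₆ hss₂ hs₆2 hs) hφs₆')
    have hu_le : (δ s).1/(-(δ s).2) ≤ T := by
      rw [← htanφ s, hTdef]
      exact Real.strictMonoOn_tan.monotoneOn ⟨hφlb s, hφub s⟩
        ⟨by linarith, by linarith⟩ hφs
    have hu2 : T^2 ≤ ((δ s).1/(-(δ s).2))^2 := by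
      have key : 0 ≤ (T - (δ s).1/(-(δ s).2))*(-(T + (δ s).1/(-(δ s).2))) := by
        apply mul_nonneg (by linarith)
        nlinarith
      nlinarith [key]
    rw [← hu_eq s hss₂]
    have h2c : 2*(T^2/(2*(1+T^2))) = T^2/(1+T^2) := by
      field_simp
    rw [h2c]
    have hp1 : (0:ℝ) < 1 + T^2 := by positivity
    have hp2 : (0:ℝ) < 1 + ((δ s).1/(-(δ s).2))^2 := by positivity
    rw [div_le_div_iff₀ hp1 hp2]
    nlinarith
  · -- Φ = 0 : the Riccati case
    -- φ is strictly positive before s₂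
    have hφpos : ∀ s, s < s₂ → 0 < φ s := by
      intro s hs
      have h0 : 0 ≤ φ s := by rw [← hΦ0]; exact hΦ_le s hs
      rcases eq_or_lt_of_le h0 with heq | h
      · exfalso
        have hzero : ∀ t, t ∈ Icc (s-2) s → φ t = 0 := by
          intro t ht
          have ht2 : t < s₂ := lt_of_le_of_lt ht.2 hs
          have h1 : φ t ≤ φ s := hφmono t s ht2 hs ht.2
          have h2 : 0 ≤ φ t := by rw [← hΦ0]; exact hΦ_le t ht2
          linarith [heq]
        have hev : φ =ᶠ[nhds (s-1)] (fun _ => 0) := by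
          apply eventually_of_mem (isOpen_Ioo.mem_nhds
            (show s-1 ∈ Ioo (s-2) s by constructor <;> linarith))
          intro t ht
          exact hzero t ⟨ht.1.le, ht.2.le⟩
        have h1 : HasDerivAt φ 0 (s-1) :=
          (hasDerivAt_const (s-1) 0).congr_of_eventuallyEq hev
        have h2 := hdφ (s-1) (by linarith)
        have h3 := h2.unique h1
        exact absurd h3 (ne_of_gt (hφd_pos (s-1) (by linarith)))
      · exact h
    -- pick the Riccati tail base point
    obtain ⟨s₇, hs₇2, hφs₇⟩ := hΦ_approx (1/4) (by norm_num)
    have hφs₇' : φ s₇ < 1/4 := by rw [hΦ0] at hφs₇; linarith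
    have htail : ∀ s, s ≤ s₇ → 0 < φ s ∧ φ s ≤ 1/4 := by
      intro s hs
      have hss₂ : s < s₂ := lt_of_le_of_lt hs hs₇2
      exact ⟨hφpos s hss₂, le_of_lt (lt_of_le_of_lt (hφmono s s₇ hss₂ hs₇2 hs) hφs₇')⟩
    -- x > 0 on the tail, and key lower bound for φ'
    have hπ := Real.pi_pos
    have hπ3 := Real.pi_gt_three
    have hxpos : ∀ s, s ≤ s₇ → 0 < (δ s).1 := by
      intro s hs
      have hss₂ : s < s₂ := lt_of_le_of_lt hs hs₇2
      have hyneg := hylt s hss₂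
      have hu : 0 < (δ s).1/(-(δ s).2) := by
        rw [← htanφ s]
        exact Real.tan_pos_of_pos_of_lt_pi_div_two (htail s hs).1 (hφub s)
      have hyne' : -(δ s).2 ≠ 0 := by simpa using hyneg.ne
      have hx : (δ s).1 = ((δ s).1/(-(δ s).2)) * (-(δ s).2) :=
        (div_mul_cancel₀ _ hyne').symm
      rw [hx]
      exact mul_pos hu (by linarith)
    have hφd_ge : ∀ s, s ≤ s₇ →
        (φ s)^2/2 + gfn (Rf (δ s))/2 ≤
          ((δ s).1^2 + ((δ s).1 - (δ s).2) * GammaFn (δ s)/2) / Rf (δ s) := by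
      intro s hs
      have hss₂ : s < s₂ := lt_of_le_of_lt hs hs₇2
      have hsJ := hIic hss₂.le
      have hyneg := hylt s hss₂
      have hR := hRpos s hsJ
      have hΓ := hΓval s hsJ hss₂.le
      have hgpos := hg0 s hsJ hss₂.le
      have hsqpos := Real.sqrt_pos.mpr hR
      have hsq := Real.sq_sqrt (Rf_nonneg (δ s))
      obtain ⟨hφp, hφ4⟩ := htail s hs
      -- u facts
      set u := (δ s).1/(-(δ s).2) with hu_def
      have hupos : 0 < u := by
        rw [hu_def, ← htanφ s]
        exact Real.tan_pos_of_pos_of_lt_pi_div_two hφp (hφub s)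
      have hule : u ≤ 1 := by
        have h14 : φ s < Real.pi/4 := by linarith [hφ4, hπ3]
        have := Real.strictMonoOn_tan.monotoneOn ⟨hφlb s, hφub s⟩
          ⟨by linarith, by linarith⟩ (le_of_lt h14)
        rw [htanφ s, Real.tan_pi_div_four] at this
        exact this
      have hφleu : φ s ≤ u := by
        have h1 : φ s < Real.tan (φ s) := Real.lt_tan hφp (hφub s)
        rw [htanφ s] at h1
        exact h1.le
      have hx2R : (φ s)^2/2 ≤ (δ s).1^2/Rf (δ s) := by
        rw [← hu_eq s hss₂, ← hu_def]
        rw [div_le_div_iff₀ (by norm_num) (by positivity)]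
        have hφ2u2 : (φ s)^2 ≤ u^2 := by nlinarith
        have hu21 : u^2 ≤ 1 := by nlinarith
        have hu4 : u^2*u^2 ≤ u^2 := by nlinarith
        nlinarith
      have hxy := ptP4 (hxpos s hs) hyneg (Real.sqrt_nonneg (Rf (δ s)))
        (by rw [hsq]; rfl)
      have hterm : gfn (Rf (δ s))/2 ≤
          (((δ s).1 - (δ s).2) * GammaFn (δ s)/2)/Rf (δ s) := by
        rw [le_div_iff₀ hR, hΓ]
        nlinarith [mul_nonneg hsqpos.le hgpos.le]
      have hsplit : ((δ s).1^2 + ((δ s).1 - (δ s).2) * GammaFn (δ s)/2) / Rf (δ s)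
          = (δ s).1^2/Rf (δ s) + (((δ s).1 - (δ s).2) * GammaFn (δ s)/2)/Rf (δ s) := by
        ring
      rw [hsplit]
      linarith
    -- Riccati comparison setup
    set L := bf (Rf (δ s₇)) with hLdef
    have hL4 : 4 ≤ L := hb4 s₇ (hIic hs₇2.le) hs₇2.le
    set A : ℝ → ℝ := fun t => L + 2*(s₇ - t) with hAdef
    have hApos : ∀ s, s ≤ s₇ → 0 < A s ∧ L ≤ A s := by
      intro s hs
      constructor
      · simp only [hAdef]; linarith
      · simp only [hAdef]; linarith
    have hbA : ∀ s, s ≤ s₇ → bf (Rf (δ s)) ≤ A s := by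
      intro s hs
      have hpair := mono_pair (ordConnected_Iic (a := s₇))
        (f := fun t => Real.log ((δ t).1^2 + (δ t).2^2)) (g := fun t => 4*t)
        (f' := fun t => (2*(δ t).1*((δ t).1 + GammaFn (δ t)/2)
          + 2*(δ t).2*((δ t).1 + (δ t).2 + GammaFn (δ t)/2)) / Rf (δ t))
        (g' := fun _ => 4)
        (fun t ht => hdlog t (hIic (lt_of_le_of_lt ht hs₇2).le))
        (fun t _ => by simpa using (hasDerivAt_id t).const_mul 4)
        (fun t ht => hlogd_ub t (hIic (lt_of_le_of_lt ht hs₇2).le)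
          (lt_of_le_of_lt ht hs₇2).le)
        (a := s) (b := s₇) hs (le_refl s₇) hs
      have e1 : Rf (δ s) = (δ s).1^2+(δ s).2^2 := rfl
      have e2 : Rf (δ s₇) = (δ s₇).1^2+(δ s₇).2^2 := rfl
      simp only [hAdef, hLdef]
      unfold bf
      rw [e1, e2]
      linarith
    have hgA : ∀ s, s ≤ s₇ → (A s * Real.sqrt (A s))⁻¹ ≤ gfn (Rf (δ s)) := by
      intro s hs
      have hb := hb4 s (hIic (lt_of_le_of_lt hs hs₇2).le) (lt_of_le_of_lt hs hs₇2).le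
      have h1 := hbA s hs
      have hAp := (hApos s hs).1
      have hsb : Real.sqrt (bf (Rf (δ s))) ≤ Real.sqrt (A s) := Real.sqrt_le_sqrt h1
      have hbpos' : 0 < bf (Rf (δ s)) := by linarith
      have hsbpos : 0 < Real.sqrt (bf (Rf (δ s))) := Real.sqrt_pos.mpr hbpos'
      have hprod : bf (Rf (δ s)) * Real.sqrt (bf (Rf (δ s))) ≤ A s * Real.sqrt (A s) :=
        mul_le_mul h1 hsb hsbpos.le hAp.le
      unfold gfn
      exact inv_anti₀ (by positivity) hprod
    have hdA : ∀ s : ℝ, HasDerivAt A (-2) s := by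
      intro s
      have h := ((hasDerivAt_id s).const_mul (-2)).const_add (L + 2*s₇)
      have h2 := h.congr_of_eventuallyEq (Eventually.of_forall
        (fun t => by simp only [hAdef]; ring :
          ∀ t, A t = (L + 2*s₇) + (-2) * t))
      simpa using h2
    have hsqA : ∀ s, s ≤ s₇ → HasDerivAt (fun t => Real.sqrt (A t))
        (-(Real.sqrt (A s))⁻¹) s := by
      intro s hs
      have hAp := (hApos s hs).1
      have hsp := Real.sqrt_pos.mpr hAp
      have h := (Real.hasDerivAt_sqrt (ne_of_gt hAp)).comp s (hdA s)
      have h' : HasDerivAt (fun t => Real.sqrt (A t))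
          (1/(2*Real.sqrt (A s)) * (-2)) s := by
        simpa [Function.comp_def] using h
      convert h' using 1
      field_simp
    have hdq : ∀ s, s ≤ s₇ → HasDerivAt (fun t => (1/4) * (Real.sqrt (A t))⁻¹)
        ((1/4) * (A s * Real.sqrt (A s))⁻¹) s := by
      intro s hs
      have hAp := (hApos s hs).1
      have hsp := Real.sqrt_pos.mpr hAp
      have h := ((hsqA s hs).inv (ne_of_gt hsp)).const_mul (1/4)
      refine h.congr_deriv ?_
      rw [Real.sq_sqrt hAp.le]
      field_simp
    have hq_le_φd : ∀ t, t ≤ s₇ → (1/4) * (A t * Real.sqrt (A t))⁻¹ ≤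
        ((δ t).1^2 + ((δ t).1 - (δ t).2) * GammaFn (δ t)/2) / Rf (δ t) := by
      intro t ht
      have h1 := hgA t ht
      have h2 := hφd_ge t ht
      have h3 : 0 ≤ (φ t)^2/2 := by positivity
      have hgnn := (hg0 t (hIic (lt_of_le_of_lt ht hs₇2).le)
        (lt_of_le_of_lt ht hs₇2).le).le
      linarith
    -- φ ≥ q on the tail
    have hm : ∀ s, s ≤ s₇ → (1/4)*(Real.sqrt (A s))⁻¹ ≤ φ s := by
      intro s hs
      by_contra hcon
      push_neg at hcon
      set ε := (1/4)*(Real.sqrt (A s))⁻¹ - φ s with hεdef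
      have hεpos : 0 < ε := by rw [hεdef]; linarith
      set s' := min s (s₇ - 1/(8*ε^2)) with hs'def
      have hs's : s' ≤ s := min_le_left _ _
      have hs'7 : s' ≤ s₇ := le_trans hs's hs
      have hA' : 1/(4*ε^2) ≤ A s' := by
        have h1 : s' ≤ s₇ - 1/(8*ε^2) := min_le_right _ _
        have hεne : ε ≠ 0 := ne_of_gt hεpos
        have h2 : (2:ℝ)*(1/(8*ε^2)) = 1/(4*ε^2) := by
          field_simp
          ring
        simp only [hAdef]
        nlinarith
      have hsq' : 1/(2*ε) ≤ Real.sqrt (A s') := by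
        rw [show (1:ℝ)/(2*ε) = Real.sqrt ((1/(2*ε))^2) by
          rw [Real.sqrt_sq (by positivity)]]
        apply Real.sqrt_le_sqrt
        calc (1/(2*ε))^2 = 1/(4*ε^2) := by
              have hεne : ε ≠ 0 := ne_of_gt hεpos
              field_simp
              ring
          _ ≤ A s' := hA'
      have hq' : (1/4)*(Real.sqrt (A s'))⁻¹ ≤ ε/2 := by
        have h2ε : (0:ℝ) < 1/(2*ε) := by positivity
        have hinv : (Real.sqrt (A s'))⁻¹ ≤ 2*ε := by
          rw [inv_le_comm₀ (lt_of_lt_of_le h2ε hsq') (by positivity)]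
          calc (2*ε)⁻¹ = 1/(2*ε) := by rw [one_div]
            _ ≤ Real.sqrt (A s') := hsq'
        linarith
      have hpair := mono_pair (ordConnected_Iic (a := s₇))
        (f := fun t => (1/4)*(Real.sqrt (A t))⁻¹) (g := φ)
        (f' := fun t => (1/4)*(A t*Real.sqrt (A t))⁻¹)
        (g' := fun t => ((δ t).1^2 + ((δ t).1 - (δ t).2) * GammaFn (δ t)/2) / Rf (δ t))
        (fun t ht => hdq t ht)
        (fun t ht => hdφ t (lt_of_le_of_lt ht hs₇2))
        (fun t ht => hq_le_φd t ht)
        (a := s') (b := s) hs'7 hs hs's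
      have hφ' := (htail s' hs'7).1
      rw [hεdef] at hεpos
      linarith
    -- n = φ + (1/128) log A is nondecreasing
    have hdlogA : ∀ s, s ≤ s₇ → HasDerivAt (fun t => -(1/128) * Real.log (A t))
        ((1/64)*(A s)⁻¹) s := by
      intro s hs
      have hAp := (hApos s hs).1
      have h := ((hdA s).log (ne_of_gt hAp)).const_mul (-(1/128))
      refine h.congr_deriv ?_
      field_simp
      ring
    have hlog_le_φd : ∀ t, t ≤ s₇ → (1/64)*(A t)⁻¹ ≤
        ((δ t).1^2 + ((δ t).1 - (δ t).2) * GammaFn (δ t)/2) / Rf (δ t) := by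
      intro t ht
      have h1 := hm t ht
      have h2 := hφd_ge t ht
      have hAp := (hApos t ht).1
      have hsp := Real.sqrt_pos.mpr hAp
      have hq2 : ((1/4)*(Real.sqrt (A t))⁻¹)^2 = (1/16)*(A t)⁻¹ := by
        rw [mul_pow, inv_pow, Real.sq_sqrt hAp.le]
        norm_num
      have hφ2 : (1/16)*(A t)⁻¹ ≤ (φ t)^2 := by
        rw [← hq2]
        have h0 : (0:ℝ) ≤ (1/4)*(Real.sqrt (A t))⁻¹ := by positivity
        nlinarith
      have hgnn := (hg0 t (hIic (lt_of_le_of_lt ht hs₇2).le)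
        (lt_of_le_of_lt ht hs₇2).le).le
      have hAinv : (0:ℝ) ≤ (A t)⁻¹ := by positivity
      linarith
    set sstar := s₇ - (L * Real.exp (128 * φ s₇ + 1))/2 with hsstardef
    have hstar7 : sstar ≤ s₇ := by
      rw [hsstardef]
      have : 0 < L * Real.exp (128 * φ s₇ + 1) := by
        apply mul_pos (by linarith) (Real.exp_pos _)
      linarith
    have hpair2 := mono_pair (ordConnected_Iic (a := s₇))
      (f := fun t => -(1/128) * Real.log (A t)) (g := φ)
      (f' := fun t => (1/64)*(A t)⁻¹)
      (g' := fun t => ((δ t).1^2 + ((δ t).1 - (δ t).2) * GammaFn (δ t)/2) / Rf (δ t))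
      (fun t ht => hdlogA t ht)
      (fun t ht => hdφ t (lt_of_le_of_lt ht hs₇2))
      (fun t ht => hlog_le_φd t ht)
      (a := sstar) (b := s₇) hstar7 (le_refl s₇) hstar7
    have hAs₇ : A s₇ = L := by simp [hAdef]
    have hAstar : A sstar = L * (1 + Real.exp (128 * φ s₇ + 1)) := by
      simp only [hAdef, hsstardef]; ring
    have hlogAstar : Real.log L + (128 * φ s₇ + 1) ≤ Real.log (A sstar) := by
      rw [hAstar, Real.log_mul (by linarith) (by positivity)]
      have h1 : Real.exp (128*φ s₇ + 1) ≤ 1 + Real.exp (128*φ s₇+1) := by linarith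
      have h2 := Real.log_le_log (Real.exp_pos _) h1
      rw [Real.log_exp] at h2
      linarith
    have hφstar := hφpos sstar (lt_of_le_of_lt hstar7 hs₇2)
    rw [hAs₇] at hpair2
    linarith
  · -- Φ > 0
    set T := Real.tan Φ with hTdef
    have hπ := Real.pi_pos
    have hTpos : 0 < T := by
      rw [hTdef]
      exact Real.tan_pos_of_pos_of_lt_pi_div_two hΦpos hΦub
    have hc₁pos : 0 < T^2/(2*(1+T^2)) := by positivity
    apply hmain _ hc₁pos (s₂-1) (by linarith)
    intro s hs
    have hss₂ : s < s₂ := by linarith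
    have hφs : Φ ≤ φ s := hΦ_le s hss₂
    have hu_ge : T ≤ (δ s).1/(-(δ s).2) := by
      rw [← htanφ s, hTdef]
      exact Real.strictMonoOn_tan.monotoneOn ⟨by linarith, hΦub⟩
        ⟨hφlb s, hφub s⟩ hφs
    have hu2 : T^2 ≤ ((δ s).1/(-(δ s).2))^2 := by nlinarith
    rw [← hu_eq s hss₂]
    have h2c : 2*(T^2/(2*(1+T^2))) = T^2/(1+T^2) := by
      field_simp
    rw [h2c]
    have hp1 : (0:ℝ) < 1 + T^2 := by positivity
    have hp2 : (0:ℝ) < 1 + ((δ s).1/(-(δ s).2))^2 := by positivity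
    rw [div_le_div_iff₀ hp1 hp2]
    nlinarith

end S9

/-- The vector field `Z* = ((y, x), (x + Γ/2, x + y + Γ/2))` belongs to Ω₀, has the same
piecewise linear part as `Z*_L = ((y, x), (x, x + y))`, but is NOT locally Σ-equivalent
to `Z*_L` near the origin. -/
theorem stmt9 :
    InOmega0 {p : ℝ × ℝ | p.1 ^ 2 + p.2 ^ 2 < 1}
      (fun p : ℝ × ℝ => (p.2, p.1))
      (fun p : ℝ × ℝ =>
        (p.1 + (1 / 2) * GammaFn p, p.1 + p.2 + (1 / 2) * GammaFn p)) ∧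
    fderiv ℝ (fun p : ℝ × ℝ =>
        ((p.1 + (1 / 2) * GammaFn p, p.1 + p.2 + (1 / 2) * GammaFn p) : ℝ × ℝ)) (0, 0) =
      fderiv ℝ (fun p : ℝ × ℝ => ((p.1, p.1 + p.2) : ℝ × ℝ)) (0, 0) ∧
    ¬ LocalSigmaEquiv
      (fun p : ℝ × ℝ => (p.2, p.1))
      (fun p : ℝ × ℝ =>
        (p.1 + (1 / 2) * GammaFn p, p.1 + p.2 + (1 / 2) * GammaFn p))
      (fun p : ℝ × ℝ => (p.2, p.1))
      (fun p : ℝ × ℝ => (p.1, p.1 + p.2)) := by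
  classical
  refine ⟨?_, ?_, ?_⟩
  · -- InOmega0
    refine ⟨?_, ?_, ?_, ?_, rfl, ?_, ?_, ?_⟩
    · exact isOpen_lt (by fun_prop) continuous_const
    · show (0:ℝ)^2 + (0:ℝ)^2 < 1
      norm_num
    · exact (contDiff_snd.prodMk contDiff_fst).contDiffOn
    · exact ((contDiff_fst.contDiffOn).add
        (contDiffOn_const.mul S9.contDiffOn_gammaFn)).prodMk
        (((contDiff_fst.contDiffOn).add (contDiff_snd.contDiffOn)).add
          (contDiffOn_const.mul S9.contDiffOn_gammaFn))
    · have h0 : GammaFn (0, 0) = 0 := by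
        have e : ((0,0) : ℝ×ℝ) = 0 := rfl
        rw [e, S9.gammaFn_zero]
      simp [h0, S9.gammaFn_zero]
    · have hXf : fderiv ℝ (fun p : ℝ×ℝ => ((p.2, p.1) : ℝ×ℝ)) 0 = S9.Smap :=
        (S9.hasFDerivAt_Xstar 0).fderiv
      have hYf : fderiv ℝ (fun p : ℝ×ℝ =>
          ((p.1 + (1/2)*GammaFn p, p.1+p.2+(1/2)*GammaFn p) : ℝ×ℝ)) 0 = S9.Lmap :=
        S9.hasFDerivAt_Ystar_zero.fderiv
      have hdX : detJ (fun p : ℝ×ℝ => ((p.2,p.1):ℝ×ℝ)) = -1 := by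
        simp only [detJ, jac11, jac12, jac21, jac22]
        rw [show ((0,0):ℝ×ℝ) = (0:ℝ×ℝ) from rfl, hXf]
        simp [S9.Smap]
      have hdY : detJ (fun p : ℝ×ℝ =>
          ((p.1 + (1/2)*GammaFn p, p.1+p.2+(1/2)*GammaFn p) : ℝ×ℝ)) = 1 := by
        simp only [detJ, jac11, jac12, jac21, jac22]
        rw [show ((0,0):ℝ×ℝ) = (0:ℝ×ℝ) from rfl, hYf]
        simp [S9.Lmap]
      rw [hdX, hdY]
      norm_num
    · have hXf : fderiv ℝ (fun p : ℝ×ℝ => ((p.2, p.1) : ℝ×ℝ)) 0 = S9.Smap :=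
        (S9.hasFDerivAt_Xstar 0).fderiv
      have hYf : fderiv ℝ (fun p : ℝ×ℝ =>
          ((p.1 + (1/2)*GammaFn p, p.1+p.2+(1/2)*GammaFn p) : ℝ×ℝ)) 0 = S9.Lmap :=
        S9.hasFDerivAt_Ystar_zero.fderiv
      have h1 : jac21 (fun p : ℝ×ℝ => ((p.2,p.1):ℝ×ℝ)) = 1 := by
        simp only [jac21]
        rw [show ((0,0):ℝ×ℝ) = (0:ℝ×ℝ) from rfl, hXf]
        simp [S9.Smap]
      have h2 : jac21 (fun p : ℝ×ℝ =>
          ((p.1 + (1/2)*GammaFn p, p.1+p.2+(1/2)*GammaFn p) : ℝ×ℝ)) = 1 := by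
        simp only [jac21]
        rw [show ((0,0):ℝ×ℝ) = (0:ℝ×ℝ) from rfl, hYf]
        simp [S9.Lmap]
      rw [h1, h2]
      norm_num
  · -- equality of Jacobians at the origin
    have hYf : fderiv ℝ (fun p : ℝ×ℝ =>
        ((p.1 + (1/2)*GammaFn p, p.1+p.2+(1/2)*GammaFn p) : ℝ×ℝ)) 0 = S9.Lmap :=
      S9.hasFDerivAt_Ystar_zero.fderiv
    have hLf : fderiv ℝ (fun p : ℝ×ℝ => ((p.1, p.1+p.2) : ℝ×ℝ)) 0 = S9.Lmap :=
      (S9.hasFDerivAt_lin 0).fderiv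
    have e : ((0,0):ℝ×ℝ) = 0 := rfl
    rw [e, hYf, hLf]
  · -- not locally Σ-equivalent
    rintro ⟨U₀, V₀, H, Hinv, hU₀, hV₀, hHc, hHinvc, hbij, hHinvH, hHHinv, hH0, hHSig,
      hXm, hYmaps, hXm', hYmaps'⟩
    have h00 : ((0,0) : ℝ×ℝ) = 0 := rfl
    have h0U : ((0,0):ℝ×ℝ) ∈ U₀ := mem_of_mem_nhds hU₀
    have h0V : ((0,0):ℝ×ℝ) ∈ V₀ := mem_of_mem_nhds hV₀
    have hHinv0 : Hinv (0,0) = (0,0) := by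
      have := hHinvH (0,0) h0U
      rwa [hH0] at this
    -- a small closed ball inside V₀
    obtain ⟨ε, hεpos, hball⟩ := Metric.mem_nhds_iff.mp hV₀
    set a := ε/2 with hadef
    have hapos : 0 < a := by rw [hadef]; linarith
    have hball' : Metric.closedBall ((0,0):ℝ×ℝ) a ⊆ V₀ := by
      refine subset_trans ?_ hball
      rw [h00]
      exact Metric.closedBall_subset_ball (by rw [hadef]; linarith)
    -- the explicit backward orbit of the linear node
    set γ : ℝ → ℝ×ℝ := fun t => (a*Real.exp t, a*t*Real.exp t) with hγdef
    have hγsol : IsSolutionOn (fun p : ℝ×ℝ => ((p.1, p.1+p.2):ℝ×ℝ)) γ (Iic 0) := by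
      intro t _
      have h1 : HasDerivAt (fun t => a*Real.exp t) (a*Real.exp t) t :=
        (Real.hasDerivAt_exp t).const_mul a
      have h2 : HasDerivAt (fun t => a*t*Real.exp t) (a*Real.exp t + a*t*Real.exp t) t := by
        have := ((hasDerivAt_id t).const_mul a).mul (Real.hasDerivAt_exp t)
        exact this.congr_deriv (by simp)
      exact h1.prodMk h2
    have hγbound : ∀ t ≤ (0:ℝ), ‖γ t‖ ≤ a := by
      intro t ht
      have hexp1 : Real.exp t ≤ 1 := Real.exp_le_one_iff.mpr ht
      have hexppos := Real.exp_pos t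
      have hb1 : |a*Real.exp t| ≤ a := by
        rw [abs_of_pos (by positivity)]
        nlinarith [mul_le_mul_of_nonneg_left hexp1 hapos.le]
      have hb2 : |a*t*Real.exp t| ≤ a := by
        have hmt : -t ≤ Real.exp (-t) := by
          have := Real.add_one_le_exp (-t)
          linarith
        have h3 : (-t)*Real.exp t ≤ 1 := by
          have h4 := mul_le_mul_of_nonneg_right hmt hexppos.le
          rwa [← Real.exp_add, neg_add_cancel, Real.exp_zero] at h4
        have hnp : a*t*Real.exp t ≤ 0 := by
          have h5 : t*(a*Real.exp t) ≤ 0 :=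
            mul_nonpos_of_nonpos_of_nonneg ht (by positivity)
          nlinarith [h5]
        rw [abs_of_nonpos hnp]
        nlinarith [mul_le_mul_of_nonneg_left h3 hapos.le]
      have : ‖γ t‖ = max ‖a*Real.exp t‖ ‖a*t*Real.exp t‖ := Prod.norm_def _
      rw [this, Real.norm_eq_abs, Real.norm_eq_abs]
      exact max_le hb1 hb2
    have hγmem : ∀ t ∈ Iic (0:ℝ), γ t ∈ V₀ ∩ {p : ℝ×ℝ | p.2 ≤ 0} := by
      intro t ht
      constructor
      · apply hball'
        rw [Metric.mem_closedBall, dist_eq_norm]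
        rw [h00, sub_zero]
        exact hγbound t ht
      · show a*t*Real.exp t ≤ 0
        have ht' : t ≤ 0 := ht
        have h5 : t*(a*Real.exp t) ≤ 0 :=
          mul_nonpos_of_nonpos_of_nonneg ht' (by positivity)
        nlinarith [h5]
    have hγV : ∀ t ∈ Iic (0:ℝ), γ t ∈ V₀ := fun t ht => (hγmem t ht).1
    have hγne : ∀ t, γ t ≠ 0 := by
      intro t h
      have h1 : a*Real.exp t = 0 := congrArg Prod.fst h
      have := Real.exp_pos t
      nlinarith
    -- sharper decay of γ
    have hγdecay : ∀ t ≤ (0:ℝ), ‖γ t‖ ≤ 2*a*Real.exp (t/2) := by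
      intro t ht
      have hexppos := Real.exp_pos t
      have hexph := Real.exp_pos (t/2)
      have hexp1 : Real.exp t ≤ 1 := Real.exp_le_one_iff.mpr ht
      have hth : Real.exp t ≤ Real.exp (t/2) := Real.exp_le_exp.mpr (by linarith)
      have hb1 : |a*Real.exp t| ≤ 2*a*Real.exp (t/2) := by
        rw [abs_of_pos (by positivity)]
        nlinarith [mul_le_mul_of_nonneg_left hth hapos.le, mul_pos hapos hexph]
      have hb2 : |a*t*Real.exp t| ≤ 2*a*Real.exp (t/2) := by
        have hmt : -t ≤ 2*Real.exp (-t/2) := by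
          have := Real.add_one_le_exp (-t/2)
          linarith
        have h3 : (-t)*Real.exp t ≤ 2*Real.exp (t/2) := by
          have h4 := mul_le_mul_of_nonneg_right hmt hexppos.le
          have h5 : Real.exp (-t/2) * Real.exp t = Real.exp (t/2) := by
            rw [← Real.exp_add]; ring_nf
          have h6 : 2*Real.exp (-t/2)*Real.exp t = 2*Real.exp (t/2) := by
            rw [mul_assoc, h5]
          linarith [h4, h6]
        have hnp : a*t*Real.exp t ≤ 0 := by
          have h5 : t*(a*Real.exp t) ≤ 0 :=
            mul_nonpos_of_nonpos_of_nonneg ht (by positivity)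
          nlinarith [h5]
        rw [abs_of_nonpos hnp]
        nlinarith [mul_le_mul_of_nonneg_left h3 hapos.le]
      have : ‖γ t‖ = max ‖a*Real.exp t‖ ‖a*t*Real.exp t‖ := Prod.norm_def _
      rw [this, Real.norm_eq_abs, Real.norm_eq_abs]
      exact max_le hb1 hb2
    -- push through Hinv
    obtain ⟨δ, J, τ, hJord, hδsol, hδmem, hτbij, hτmono, hτcont, hHγ⟩ :=
      hYmaps' γ (Iic 0) ordConnected_Iic hγsol hγmem
    -- apply the impossibility theorem
    apply S9.no_orbit δ J hJord
    · intro s hs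
      exact hδsol s hs
    · intro s hs
      exact (hδmem s hs).2
    · -- δ never vanishes
      intro s hs
      obtain ⟨t, ht, rfl⟩ := hτbij.surjOn hs
      rw [← hHγ t ht]
      intro hcon
      have h1 : H (Hinv (γ t)) = γ t := hHHinv (γ t) (hγV t ht)
      rw [hcon, ← h00, hH0, h00] at h1
      exact hγne t h1.symm
    · -- the limit condition
      intro ε' hε'
      have hcont : ContinuousAt Hinv ((0,0):ℝ×ℝ) := hHinvc.continuousAt hV₀
      rw [Metric.continuousAt_iff] at hcont
      obtain ⟨ρ, hρpos, hρ⟩ := hcont ε' hε'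
      set t₀ := min 0 (2*Real.log (ρ/(8*a))) with ht₀def
      have ht₀0 : t₀ ≤ 0 := min_le_left _ _
      refine ⟨τ t₀, hτbij.mapsTo ht₀0, ?_⟩
      intro s hs hsle
      obtain ⟨t, ht, rfl⟩ := hτbij.surjOn hs
      have htt₀ : t ≤ t₀ := by
        by_contra hcon
        push_neg at hcon
        have := hτmono ht₀0 ht hcon
        linarith
      have hsmall : ‖γ t‖ < ρ := by
        have h1 := hγdecay t (le_trans htt₀ ht₀0)
        have h2 : Real.exp (t/2) ≤ Real.exp (t₀/2) := Real.exp_le_exp.mpr (by linarith)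
        have h3 : Real.exp (t₀/2) ≤ ρ/(8*a) := by
          have h4 : t₀/2 ≤ Real.log (ρ/(8*a)) := by
            rw [ht₀def]
            have := min_le_right 0 (2*Real.log (ρ/(8*a)))
            linarith
          calc Real.exp (t₀/2) ≤ Real.exp (Real.log (ρ/(8*a))) := Real.exp_le_exp.mpr h4
            _ = ρ/(8*a) := Real.exp_log (by positivity)
        calc ‖γ t‖ ≤ 2*a*Real.exp (t/2) := h1
          _ ≤ 2*a*(ρ/(8*a)) := by nlinarith [Real.exp_pos (t/2)]
          _ = ρ/4 := by field_simp; ring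
          _ < ρ := by linarith
      rw [← hHγ t ht]
      have := hρ (show dist (γ t) ((0,0):ℝ×ℝ) < ρ by
        rw [dist_eq_norm, h00, sub_zero]; exact hsmall)
      rw [hHinv0] at this
      rw [show ‖Hinv (γ t)‖ = dist (Hinv (γ t)) ((0,0):ℝ×ℝ) by
        rw [dist_eq_norm, h00, sub_zero]]
      exact this
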